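/- In the Section 7 setting, suppose Γ' is a signed GKM structure on the underlying graph of Γ inducing the same unsigned GKM graph as Γ in which the labels of the basic edges f_i and h_i never agree, normalized (after applying the automorphism interchanging the rows) so that f_i carries label −γ_i for i < j, label γ_i for i ≥ j, and h_i the opposite, where j is the unique index at which k_j ≠ k_{j−1} among the signs ±1. Then the signs of the weights α'_i of the fiber edges g_i are uniquely determined by the existence of a compatible connection: α'_j = −γ_{j−1} − γ_j, α'_i = γ_{i−1} − γ_i for i = j+1,…,n, and α'_i = −γ_{i−1} + γ_i for i = 1,…,j−1. Consequently, Γ' is unique up to isomorphism of signed GKM graphs, and every vertex of Γ' is interior. -/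

import Mathlib

open Classical

namespace GKMPaper

/-- `ℤ^m`, the weight lattice. -/
abbrev Zm (m : ℕ) := Fin m → ℤ

/-- The relation identifying a vector with its negative. -/
def pmRel (m : ℕ) (a b : Zm m) : Prop := a = b ∨ a = -b

theorem pmRel_equiv (m : ℕ) : Equivalence (pmRel m) := by
  constructor
  · intro a; exact Or.inl rfl
  · intro a b hab
    rcases hab with hh | hh
    · exact Or.inl hh.symm
    · exact Or.inr (by rw [hh, neg_neg])
  · intro a b c h1 h2
    rcases h1 with h1 | h1 <;> rcases h2 with h2 | h2
    · exact Or.inl (h1.trans h2)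
    · exact Or.inr (h1.trans h2)
    · exact Or.inr (by rw [h1, h2])
    · exact Or.inl (by rw [h1, h2, neg_neg])

def pmSetoid (m : ℕ) : Setoid (Zm m) := ⟨pmRel m, pmRel_equiv m⟩

/-- `ℤ^m / ±1`. -/
def ZmPM (m : ℕ) := Quotient (pmSetoid m)

/-- The projection `ℤ^m → ℤ^m/±1`. -/
def pm {m : ℕ} (a : Zm m) : ZmPM m := Quotient.mk (pmSetoid m) a

/-- Linear independence over `ℤ`. -/
def Indep {m : ℕ} (a b : Zm m) : Prop :=
  ∀ c d : ℤ, c • a + d • b = 0 → c = 0 ∧ d = 0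

/-- An abstract graph with finite vertex and edge sets, each edge occurring with
both orientations, and no loops. -/
structure OrGraph : Type 1 where
  V : Type
  E : Type
  fV : Fintype V
  fE : Fintype E
  dV : DecidableEq V
  dE : DecidableEq E
  src : E → V
  dst : E → V
  rev : E → E
  rev_rev : ∀ e, rev (rev e) = e
  rev_ne : ∀ e, rev e ≠ e
  src_rev : ∀ e, src (rev e) = dst e
  no_loop : ∀ e, src e ≠ dst e

attribute [instance] OrGraph.fV OrGraph.fE OrGraph.dV OrGraph.dE

/-- A connection on a graph. -/
structure Connection (G : OrGraph) where
  t : G.E → G.E → G.E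
  src_t : ∀ e f, G.src f = G.src e → G.src (t e f) = G.dst e
  t_self : ∀ e, t e e = G.rev e
  t_inv : ∀ e f, G.src f = G.src e → t (G.rev e) (t e f) = f

/-- `k`-valence. -/
def OrGraph.Regular (G : OrGraph) (k : ℕ) : Prop :=
  ∀ v : G.V, Fintype.card {e : G.E // G.src e = v} = k

def OrGraph.Adj (G : OrGraph) (v w : G.V) : Prop :=
  ∃ e, G.src e = v ∧ G.dst e = w

def OrGraph.IsConn (G : OrGraph) : Prop :=
  ∀ v w : G.V, Relation.ReflTransGen G.Adj v w

/-- Compatibility of a connection with an unsigned axial function. -/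
def UnsignedCompat {m : ℕ} (G : OrGraph) (α : G.E → ZmPM m) (C : Connection G) : Prop :=
  (∀ e f : G.E, G.src f = G.src e → e ≠ f →
      ∀ a b : Zm m, pm a = α e → pm b = α f → Indep a b) ∧
  (∀ e f : G.E, G.src f = G.src e →
      ∃ (a g : Zm m) (c : ℤ), pm a = α f ∧ pm g = α e ∧ α (C.t e f) = pm (a + c • g)) ∧
  (∀ e : G.E, α (G.rev e) = α e)

/-- `(G, α)` is an (unsigned) abstract GKM graph of valence `k` with labels in `ℤ^m/±1`. -/
def IsGKM {m : ℕ} (G : OrGraph) (k : ℕ) (α : G.E → ZmPM m) : Prop :=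
  G.Regular k ∧ G.IsConn ∧ ∃ C : Connection G, UnsignedCompat G α C

/-- Compatibility of a connection with a signed axial function. -/
def SignedCompat {m : ℕ} (G : OrGraph) (α : G.E → Zm m) (C : Connection G) : Prop :=
  (∀ e f : G.E, G.src f = G.src e → e ≠ f → Indep (α e) (α f)) ∧
  (∀ e f : G.E, G.src f = G.src e → ∃ c : ℤ, α (C.t e f) = α f + c • α e) ∧
  (∀ e : G.E, α (G.rev e) = - α e)

/-- `(G, α)` is a signed abstract GKM graph of valence `k` with labels in `ℤ^m`. -/
def IsSignedGKM {m : ℕ} (G : OrGraph) (k : ℕ) (α : G.E → Zm m) : Prop :=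
  G.Regular k ∧ G.IsConn ∧ ∃ C : Connection G, SignedCompat G α C

/-- Effectivity of an unsigned GKM graph: at every vertex, the labels of the
outgoing edges lift to a generating set of `ℤ^m`. -/
def Effective {m : ℕ} (G : OrGraph) (α : G.E → ZmPM m) : Prop :=
  ∀ v : G.V, ∃ lift : {e : G.E // G.src e = v} → Zm m,
    (∀ e, pm (lift e) = α e.1) ∧ Submodule.span ℤ (Set.range lift) = ⊤

def SignedEffective {m : ℕ} (G : OrGraph) (α : G.E → Zm m) : Prop :=
  ∀ v : G.V,
    Submodule.span ℤ (Set.range (fun e : {e : G.E // G.src e = v} => α e.1)) = ⊤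

/-- A graph fibration: a morphism sending vertices to vertices and horizontal
edges to edges, bijectively from the horizontal edges at `p` to the edges at `π(p)`. -/
structure GraphFib (G B : OrGraph) where
  onV : G.V → B.V
  onE : G.E → B.E
  src_onE : ∀ e, onV (G.src e) ≠ onV (G.dst e) → B.src (onE e) = onV (G.src e)
  dst_onE : ∀ e, onV (G.src e) ≠ onV (G.dst e) → B.dst (onE e) = onV (G.dst e)
  rev_onE : ∀ e, onV (G.src e) ≠ onV (G.dst e) → onE (G.rev e) = B.rev (onE e)

def GraphFib.Vertical {G B : OrGraph} (π : GraphFib G B) (e : G.E) : Prop :=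
  π.onV (G.src e) = π.onV (G.dst e)

def GraphFib.IsFib {G B : OrGraph} (π : GraphFib G B) : Prop :=
  ∀ p : G.V, Function.Bijective
    (fun e : {e : G.E // G.src e = p ∧ ¬ π.Vertical e} =>
      (⟨π.onE e.1, by rw [π.src_onE e.1 e.2.2, e.2.1]⟩ : {f : B.E // B.src f = π.onV p}))

/-- The extra conditions for a (unsigned) GKM fibration, w.r.t. connections `C`, `CB`. -/
def GKMFibCompat {m : ℕ} {G B : OrGraph} (αΓ : G.E → ZmPM m) (αB : B.E → ZmPM m)
    (π : GraphFib G B) (C : Connection G) (CB : Connection B) : Prop :=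
  (∀ e, ¬ π.Vertical e → αΓ e = αB (π.onE e)) ∧
  (∀ e f, G.src f = G.src e → π.Vertical f → π.Vertical (C.t e f)) ∧
  (∀ e f, G.src f = G.src e → ¬ π.Vertical e → ¬ π.Vertical f →
      ¬ π.Vertical (C.t e f) ∧ π.onE (C.t e f) = CB.t (π.onE e) (π.onE f))

/-- `π` is a GKM fibration of unsigned GKM graphs. -/
def IsGKMFib {m : ℕ} {G B : OrGraph} (αΓ : G.E → ZmPM m) (αB : B.E → ZmPM m)
    (π : GraphFib G B) : Prop :=
  π.IsFib ∧ ∃ (C : Connection G) (CB : Connection B),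
    UnsignedCompat G αΓ C ∧ UnsignedCompat B αB CB ∧ GKMFibCompat αΓ αB π C CB

def SignedGKMFibCompat {m : ℕ} {G B : OrGraph} (sΓ : G.E → Zm m) (sB : B.E → Zm m)
    (π : GraphFib G B) (C : Connection G) (CB : Connection B) : Prop :=
  (∀ e, ¬ π.Vertical e → sΓ e = sB (π.onE e)) ∧
  (∀ e f, G.src f = G.src e → π.Vertical f → π.Vertical (C.t e f)) ∧
  (∀ e f, G.src f = G.src e → ¬ π.Vertical e → ¬ π.Vertical f →
      ¬ π.Vertical (C.t e f) ∧ π.onE (C.t e f) = CB.t (π.onE e) (π.onE f))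

/-- `π` is a signed GKM fibration of signed GKM graphs. -/
def IsSignedGKMFib {m : ℕ} {G B : OrGraph} (sΓ : G.E → Zm m) (sB : B.E → Zm m)
    (π : GraphFib G B) : Prop :=
  π.IsFib ∧ ∃ (C : Connection G) (CB : Connection B),
    SignedCompat G sΓ C ∧ SignedCompat B sB CB ∧ SignedGKMFibCompat sΓ sB π C CB

/-- `(π, ft)` is a fiberwise signed fibration: `ft` is a lift of `αΓ` on the
vertical edges, satisfying the congruence condition w.r.t. suitable connections. -/
def IsFiberwiseSigned {m : ℕ} {G B : OrGraph} (αΓ : G.E → ZmPM m) (αB : B.E → ZmPM m)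
    (π : GraphFib G B) (ft : G.E → Zm m) : Prop :=
  π.IsFib ∧
  (∀ e, π.Vertical e → pm (ft e) = αΓ e) ∧
  (∀ e, π.Vertical e → ft (G.rev e) = - ft e) ∧
  ∃ (C : Connection G) (CB : Connection B),
    UnsignedCompat G αΓ C ∧ UnsignedCompat B αB CB ∧ GKMFibCompat αΓ αB π C CB ∧
    ∀ e f, G.src f = G.src e → π.Vertical f →
      ∃ (g : Zm m) (c : ℤ), pm g = αΓ e ∧ ft (C.t e f) = ft f + c • g

/-- Isomorphism of unsigned GKM graphs. -/
structure GKMIso {m : ℕ} (G : OrGraph) (α : G.E → ZmPM m)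
    (G' : OrGraph) (α' : G'.E → ZmPM m) : Type where
  fV : G.V ≃ G'.V
  fE : G.E ≃ G'.E
  φ : Zm m ≃ₗ[ℤ] Zm m
  src_comm : ∀ e, G'.src (fE e) = fV (G.src e)
  dst_comm : ∀ e, G'.dst (fE e) = fV (G.dst e)
  rev_comm : ∀ e, fE (G.rev e) = G'.rev (fE e)
  lab : ∀ (e : G.E) (a : Zm m), pm a = α e → α' (fE e) = pm (φ a)

/-- Isomorphism of signed GKM graphs. -/
structure SignedGKMIso {m : ℕ} (G : OrGraph) (α : G.E → Zm m)
    (G' : OrGraph) (α' : G'.E → Zm m) : Type where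
  fV : G.V ≃ G'.V
  fE : G.E ≃ G'.E
  φ : Zm m ≃ₗ[ℤ] Zm m
  src_comm : ∀ e, G'.src (fE e) = fV (G.src e)
  dst_comm : ∀ e, G'.dst (fE e) = fV (G.dst e)
  rev_comm : ∀ e, fE (G.rev e) = G'.rev (fE e)
  lab : ∀ e, α' (fE e) = φ (α e)

/-- Equivalence of fiberwise signed fibrations over the same base (identity on `ℤ^m`). -/
structure FSFEquiv {m : ℕ} {G B G' : OrGraph}
    (αΓ : G.E → ZmPM m) (π : GraphFib G B) (ft : G.E → Zm m)
    (αΓ' : G'.E → ZmPM m) (π' : GraphFib G' B) (ft' : G'.E → Zm m) : Type where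
  fV : G.V ≃ G'.V
  fE : G.E ≃ G'.E
  src_comm : ∀ e, G'.src (fE e) = fV (G.src e)
  dst_comm : ∀ e, G'.dst (fE e) = fV (G.dst e)
  rev_comm : ∀ e, fE (G.rev e) = G'.rev (fE e)
  lab : ∀ e, αΓ' (fE e) = αΓ e
  baseV : ∀ p, π'.onV (fV p) = π.onV p
  baseE : ∀ e, ¬ π.Vertical e → π'.onE (fE e) = π.onE e
  fiblab : ∀ e, π.Vertical e → ft' (fE e) = ft e

/-- Equivalence of signed GKM fibrations over the same base (identity on `ℤ^m`). -/
structure SFEquiv {m : ℕ} {G B G' : OrGraph}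
    (sΓ : G.E → Zm m) (π : GraphFib G B)
    (sΓ' : G'.E → Zm m) (π' : GraphFib G' B) : Type where
  fV : G.V ≃ G'.V
  fE : G.E ≃ G'.E
  src_comm : ∀ e, G'.src (fE e) = fV (G.src e)
  dst_comm : ∀ e, G'.dst (fE e) = fV (G.dst e)
  rev_comm : ∀ e, fE (G.rev e) = G'.rev (fE e)
  lab : ∀ e, sΓ' (fE e) = sΓ e
  baseV : ∀ p, π'.onV (fV p) = π.onV p
  baseE : ∀ e, ¬ π.Vertical e → π'.onE (fE e) = π.onE e

/-- Realizing `ℤ²` inside `ℝ² = ℂ`. -/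
noncomputable def toC (a : Zm 2) : ℂ := (a 0 : ℝ) + (a 1 : ℝ) * Complex.I

def cross (a b : ℂ) : ℝ := a.re * b.im - a.im * b.re

/-- A vertex of a signed GKM graph with labels in `ℤ²` is interior if the cone
spanned by the labels of the edges emanating from it is all of `ℝ²`. -/
def InteriorVtx (G : OrGraph) (α : G.E → Zm 2) (p : G.V) : Prop :=
  ∀ x : ℂ, ∃ c : G.E → ℝ, (∀ e, 0 ≤ c e) ∧
    x = ∑ e ∈ Finset.univ.filter (fun e : G.E => G.src e = p), c e • toC (α e)

/-- The angle from `w` to `w'`, represented in `[0, 2π)` if `ε = true`,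
and in `(-2π, 0]` if `ε = false`. -/
noncomputable def angTo (ε : Bool) (w w' : ℂ) : ℝ :=
  if ε then (if (w' / w).arg < 0 then (w' / w).arg + 2 * Real.pi else (w' / w).arg)
  else (if 0 < (w' / w).arg then (w' / w).arg - 2 * Real.pi else (w' / w).arg)

/-- The winding number of a cyclic sequence of vectors w.r.t. the orientation `ε`. -/
noncomputable def winding {nn : ℕ} [NeZero nn] (w : ZMod nn → ℂ) (ε : Bool) : ℝ :=
  (1 / (2 * Real.pi)) * ∑ i : ZMod nn, |angTo ε (w i) (w (i + 1))|

def LocallyConvex {nn : ℕ} (w : ZMod nn → ℂ) : Prop :=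
  (∀ i, angTo true (w i) (w (i + 1)) ∈ Set.Ioo 0 Real.pi) ∨
  (∀ i, angTo false (w i) (w (i + 1)) ∈ Set.Ioo (-Real.pi) 0)

/-- `ε` is the preferred orientation of the locally convex sequence `w`. -/
def Preferred {nn : ℕ} (w : ZMod nn → ℂ) (ε : Bool) : Prop :=
  (ε = true ∧ ∀ i, angTo true (w i) (w (i + 1)) ∈ Set.Ioo 0 Real.pi) ∨
  (ε = false ∧ ∀ i, angTo false (w i) (w (i + 1)) ∈ Set.Ioo (-Real.pi) 0)

/-- `P` lists the vertices of a strictly convex polygon in cyclic order. -/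
def ConvexCyclic {nn : ℕ} (P : ZMod nn → ℂ) : Prop :=
  (∀ i j, j ≠ i → j ≠ i + 1 → 0 < cross (P (i + 1) - P i) (P j - P i)) ∨
  (∀ i j, j ≠ i → j ≠ i + 1 → cross (P (i + 1) - P i) (P j - P i) < 0)

def SubAdj (G : OrGraph) (S : Set G.E) (v w : G.V) : Prop :=
  ∃ e ∈ S, G.src e = v ∧ G.dst e = w

/-- `S` is (the edge set of) a connected `2`-valent signed GKM subgraph of `(G, α)`. -/
def IsSigned2ValentSub (G : OrGraph) (α : G.E → Zm 2) (S : Set G.E) : Prop :=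
  S.Nonempty ∧
  (∀ e ∈ S, G.rev e ∈ S) ∧
  (∀ v : G.V, (∃ e ∈ S, G.src e = v) → Nat.card {e : G.E // e ∈ S ∧ G.src e = v} = 2) ∧
  (∀ v w : G.V, (∃ e ∈ S, G.src e = v) → (∃ e ∈ S, G.src e = w) →
      Relation.ReflTransGen (SubAdj G S) v w) ∧
  ∃ T : G.E → G.E → G.E,
    (∀ e f, e ∈ S → f ∈ S → G.src f = G.src e → T e f ∈ S ∧ G.src (T e f) = G.dst e) ∧
    (∀ e, e ∈ S → T e e = G.rev e) ∧
    (∀ e f, e ∈ S → f ∈ S → G.src f = G.src e → T (G.rev e) (T e f) = f) ∧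
    (∀ e f, e ∈ S → f ∈ S → G.src f = G.src e → ∃ c : ℤ, α (T e f) = α f + c • α e)

/-- A `2`-valent signed GKM subgraph of polytope type: it is a cycle realized by the
boundary edges of a simple convex `2`-polytope, with labels representing the slopes. -/
def IsPolytopeTypeSub (G : OrGraph) (α : G.E → Zm 2) (S : Set G.E) : Prop :=
  IsSigned2ValentSub G α S ∧
  ∃ np : ℕ, 3 ≤ np ∧
    ∃ (cyc : ZMod np → G.E) (P : ZMod np → ℂ) (t : ZMod np → ℝ),
      (∀ i, cyc i ∈ S) ∧
      (∀ ed ∈ S, ∃ i, ed = cyc i ∨ ed = G.rev (cyc i)) ∧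
      (∀ i, G.dst (cyc i) = G.src (cyc (i + 1))) ∧
      ConvexCyclic P ∧
      (∀ i, 0 < t i) ∧
      (∀ i, P (i + 1) - P i = t i • toC (α (cyc i)))

/-- A fibration over an `n`-gon base is of product type if the lifts of a path
once around the base are closed. -/
def ProductType {G B : OrGraph} (π : GraphFib G B) {nn : ℕ} (eB : ZMod nn → B.E) : Prop :=
  ∃ l : ZMod nn → G.E,
    ∀ i, ¬ π.Vertical (l i) ∧ π.onE (l i) = eB i ∧ G.dst (l i) = G.src (l (i + 1))

/-- `ℤ`-indexed `n`-gon data for a `2`-valent base graph. -/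
structure ZGonData (B : OrGraph) (n : ℕ) where
  v : ℤ → B.V
  eB : ℤ → B.E
  v_per : ∀ i, v (i + n) = v i
  e_per : ∀ i, eB (i + n) = eB i
  src_e : ∀ i, B.src (eB i) = v i
  dst_e : ∀ i, B.dst (eB i) = v (i + 1)
  v_inj : ∀ i j : ℤ, 0 ≤ i → i < n → 0 ≤ j → j < n → v i = v j → i = j
  v_surj : ∀ w : B.V, ∃ i : ℤ, v i = w
  e_cover : ∀ ed : B.E, ∃ i : ℤ, ed = eB i ∨ ed = B.rev (eB i)

/-- A choice of sign representatives `γ_i` of the base labels with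
`γ_i ≡ -γ_{i+2} (mod γ_{i+1})` for all `i ∈ ℤ`. -/
structure GammaData {B : OrGraph} {n : ℕ} (αB : B.E → ZmPM 2) (D : ZGonData B n) where
  γ : ℤ → Zm 2
  lift : ∀ i, pm (γ i) = αB (D.eB i)
  cong : ∀ i, ∃ c : ℤ, γ i + γ (i + 2) = c • γ (i + 1)

/-- A fiberwise signed `3`-valent GKM fibration over `(B, αB)`. -/
structure FSFOver (B : OrGraph) (αB : B.E → ZmPM 2) : Type 1 where
  G : OrGraph
  αΓ : G.E → ZmPM 2
  hΓ : IsGKM G 3 αΓ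
  π : GraphFib G B
  ft : G.E → Zm 2
  isfs : IsFiberwiseSigned αΓ αB π ft

def FSFOver.Equiv {B : OrGraph} {αB : B.E → ZmPM 2} (F F' : FSFOver B αB) : Prop :=
  Nonempty (FSFEquiv F.αΓ F.π F.ft F'.αΓ F'.π F'.ft)

/-- A signed `3`-valent GKM fibration over the signed graph `(B, sB)`. -/
structure SFOver (B : OrGraph) (sB : B.E → Zm 2) : Type 1 where
  G : OrGraph
  sΓ : G.E → Zm 2
  hΓ : IsSignedGKM G 3 sΓ
  π : GraphFib G B
  issf : IsSignedGKMFib sΓ sB π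

def SFOver.Equiv {B : OrGraph} {sB : B.E → Zm 2} (F F' : SFOver B sB) : Prop :=
  Nonempty (SFEquiv F.sΓ F.π F'.sΓ F'.π)

/-- The fibration `F` realizes the classification datum `([k], η)` w.r.t. the fixed data. -/
def RealizesFS {B : OrGraph} {αB : B.E → ZmPM 2} {n : ℕ} (D : ZGonData B n)
    (Γd : GammaData αB D) (F : FSFOver B αB) (k : ZMod n → ℤ) (η : Bool) : Prop :=
  (η = false ↔ ProductType F.π (fun i : ZMod n => D.eB i.val)) ∧
  ∃ (gE : ℤ → F.G.E) (αf : ℤ → Zm 2) (kk : ℤ → ℤ),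
    (∀ i, F.π.Vertical (gE i)) ∧
    (∀ i, F.π.onV (F.G.src (gE i)) = D.v i) ∧
    (∀ i, gE (i + n) = gE i ∨ gE (i + n) = F.G.rev (gE i)) ∧
    (∀ i, pm (αf i) = F.αΓ (gE i)) ∧
    (∀ i, ∃ c : ℤ, αf (i + 1) = αf i + c • Γd.γ i) ∧
    (∀ i, αf i = kk i • Γd.γ (i - 1) - kk (i - 1) • Γd.γ i) ∧
    (∀ i, kk i ≠ 0) ∧
    (∀ i : ZMod n, k i = kk i.val)

/-- The signed fibration `F` realizes the classification datum `([k], η)`. -/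
def RealizesS {B : OrGraph} (sB : B.E → Zm 2) {αB : B.E → ZmPM 2} {n : ℕ}
    (D : ZGonData B n) (Γd : GammaData αB D) (F : SFOver B sB)
    (k : ZMod n → ℤ) (η : Bool) : Prop :=
  (η = false ↔ ProductType F.π (fun i : ZMod n => D.eB i.val)) ∧
  ∃ (gE : ℤ → F.G.E) (αf : ℤ → Zm 2) (kk : ℤ → ℤ),
    (∀ i, F.π.Vertical (gE i)) ∧
    (∀ i, F.π.onV (F.G.src (gE i)) = D.v i) ∧
    (∀ i, gE (i + n) = gE i ∨ gE (i + n) = F.G.rev (gE i)) ∧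
    (∀ i, pm (αf i) = pm (F.sΓ (gE i))) ∧
    (∀ i, ∃ c : ℤ, αf (i + 1) = αf i + c • Γd.γ i) ∧
    (∀ i, αf i = kk i • Γd.γ (i - 1) - kk (i - 1) • Γd.γ i) ∧
    (∀ i, kk i ≠ 0) ∧
    (∀ i : ZMod n, k i = kk i.val)

def KRel (n : ℕ) (a b : {k : ZMod n → ℤ // ∀ i, k i ≠ 0}) : Prop :=
  a.1 = b.1 ∨ a.1 = - b.1

/-- `((ℤ∖{0})^n)/±1`. -/
def KClass (n : ℕ) := Quot (KRel n)

/-- The Section 7 setting: a signed GKM fibration of twisted type of a `3`-valent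
signed GKM graph `Γ` over `B`, the boundary of a 2-dimensional Delzant polytope with
`n` vertices, with `Γ` having `n-1` interior vertices; with the basic edges `f i`, `h i`
over `e i` and the fiber edges `g i`. -/
structure Section7 : Type 1 where
  n : ℕ
  hn : 3 ≤ n
  G : OrGraph
  B : OrGraph
  aG : G.E → Zm 2
  aB : B.E → Zm 2
  hG : IsSignedGKM G 3 aG
  hB : IsSignedGKM B 2 aB
  π : GraphFib G B
  hfib : IsSignedGKMFib aG aB π
  v : ZMod n → B.V
  e : ZMod n → B.E
  v_bij : Function.Bijective v
  src_e : ∀ i, B.src (e i) = v i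
  dst_e : ∀ i, B.dst (e i) = v (i + 1)
  e_cover : ∀ ed : B.E, ∃ i, ed = e i ∨ ed = B.rev (e i)
  P : ZMod n → ℂ
  tl : ZMod n → ℝ
  tl_pos : ∀ i, 0 < tl i
  polygon : ConvexCyclic P
  slope : ∀ i, P (i + 1) - P i = tl i • toC (aB (e i))
  delzant : ∀ i, (aB (e (i - 1)) 0) * (aB (e i) 1) - (aB (e (i - 1)) 1) * (aB (e i) 0) = 1 ∨
                 (aB (e (i - 1)) 0) * (aB (e i) 1) - (aB (e (i - 1)) 1) * (aB (e i) 0) = -1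
  f : ZMod n → G.E
  h : ZMod n → G.E
  g : ZMod n → G.E
  f_horiz : ∀ i, ¬ π.Vertical (f i)
  h_horiz : ∀ i, ¬ π.Vertical (h i)
  f_over : ∀ i, π.onE (f i) = e i
  h_over : ∀ i, π.onE (h i) = e i
  f_ne_h : ∀ i, f i ≠ h i
  g_vert : ∀ i, π.Vertical (g i)
  g_src : ∀ i, G.src (g i) = G.src (f i)
  g_dst : ∀ i, G.dst (g i) = G.src (h i)
  chain_f : ∀ i : ZMod n, i + 1 ≠ 0 → G.dst (f i) = G.src (f (i + 1))
  chain_h : ∀ i : ZMod n, i + 1 ≠ 0 → G.dst (h i) = G.src (h (i + 1))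
  twist_f : G.dst (f (-1)) = G.src (h 0)
  twist_h : G.dst (h (-1)) = G.src (f 0)
  k : ZMod n → ℤ
  k_ne : ∀ i, k i ≠ 0
  fiberweight : ∀ i, aG (g i) =
    k i • aB (e (i - 1)) - (if i = 0 then - k (i - 1) else k (i - 1)) • aB (e i)
  interior_count : Nat.card {p : G.V // InteriorVtx G aG p} = n - 1

/-- The type II signed structure: the signs of the labels of every second pair
of basic edges are reversed. -/
noncomputable def Section7.alphaII (S : Section7) : S.G.E → Zm 2 :=
  fun ed =>
    if ∃ i : ZMod S.n, Odd i.val ∧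
        (ed = S.f i ∨ ed = S.h i ∨ ed = S.G.rev (S.f i) ∨ ed = S.G.rev (S.h i))
    then - S.aG ed else S.aG ed


/-! ### Algebra in `Zm 2` -/

lemma pm_eq_iff {m : ℕ} (a b : Zm m) : pm a = pm b ↔ (a = b ∨ a = -b) := by
  constructor
  · intro h
    exact Quotient.exact h
  · intro h
    exact Quotient.sound h

lemma coeff_unique {a b : Zm 2} (hd : a 0 * b 1 - a 1 * b 0 ≠ 0) {p q p' q' : ℤ}
    (h : p • a + q • b = p' • a + q' • b) : p = p' ∧ q = q' := by
  have h0 := congrFun h 0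
  have h1 := congrFun h 1
  simp only [Pi.add_apply, Pi.smul_apply, smul_eq_mul] at h0 h1
  constructor
  · have key : (p - p') * (a 0 * b 1 - a 1 * b 0) = 0 := by linear_combination b 1 * h0 - b 0 * h1
    have := mul_eq_zero.mp key
    rcases this with h' | h'
    · linarith
    · exact absurd h' hd
  · have key : (q - q') * (a 0 * b 1 - a 1 * b 0) = 0 := by linear_combination a 0 * h1 - a 1 * h0
    have := mul_eq_zero.mp key
    rcases this with h' | h'
    · linarith
    · exact absurd h' hd




lemma OrGraph.dst_rev (G : OrGraph) (e : G.E) : G.dst (G.rev e) = G.src e := by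
  have := G.src_rev (G.rev e)
  rw [G.rev_rev] at this
  exact this.symm

lemma GraphFib.vert_rev {G B : OrGraph} (π : GraphFib G B) (e : G.E) :
    π.Vertical (G.rev e) ↔ π.Vertical e := by
  unfold GraphFib.Vertical
  rw [G.src_rev, G.dst_rev]
  exact eq_comm

lemma Connection.t_inj {G : OrGraph} (C : Connection G) {e x y : G.E}
    (hx : G.src x = G.src e) (hy : G.src y = G.src e) (h : C.t e x = C.t e y) : x = y := by
  have h1 := C.t_inv e x hx
  rw [h, C.t_inv e y hy] at h1
  exact h1.symm

/-- In a 3-valent graph, three distinct edges at a vertex exhaust all edges there. -/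
lemma three_edges {G : OrGraph} (h3 : G.Regular 3) {v : G.V} {e1 e2 e3 : G.E}
    (h1 : G.src e1 = v) (h2 : G.src e2 = v) (h3' : G.src e3 = v)
    (d12 : e1 ≠ e2) (d13 : e1 ≠ e3) (d23 : e2 ≠ e3) :
    ∀ e, G.src e = v → e = e1 ∨ e = e2 ∨ e = e3 := by
  intro e he
  let T := {x : G.E // G.src x = v}
  have hc : Fintype.card T = 3 := h3 v
  let s : Finset T := {⟨e1, h1⟩, ⟨e2, h2⟩, ⟨e3, h3'⟩}
  have hs : s.card = 3 := by
    simp only [s, Finset.card_insert_of_notMem, Finset.mem_insert, Finset.mem_singleton]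
    rw [Finset.card_insert_of_notMem, Finset.card_insert_of_notMem, Finset.card_singleton]
    · simp only [Finset.mem_singleton, Subtype.mk.injEq]
      exact fun hq => d23 (congrArg Subtype.val hq)
    · simp only [Finset.mem_insert, Finset.mem_singleton, Subtype.mk.injEq]
      push_neg
      exact ⟨fun hq => d12 (congrArg Subtype.val hq), fun hq => d13 (congrArg Subtype.val hq)⟩
  have huniv : s = Finset.univ := Finset.eq_univ_of_card s (hs.trans hc.symm)
  have : (⟨e, he⟩ : T) ∈ s := by rw [huniv]; exact Finset.mem_univ _
  simp only [s, Finset.mem_insert, Finset.mem_singleton, Subtype.mk.injEq] at this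
  exact this

/-- In a 2-valent graph, two distinct edges at a vertex exhaust all edges there. -/
lemma two_edges {G : OrGraph} (h2 : G.Regular 2) {v : G.V} {e1 e2 : G.E}
    (h1 : G.src e1 = v) (h2' : G.src e2 = v) (d12 : e1 ≠ e2) :
    ∀ e, G.src e = v → e = e1 ∨ e = e2 := by
  intro e he
  let T := {x : G.E // G.src x = v}
  have hc : Fintype.card T = 2 := h2 v
  let s : Finset T := {⟨e1, h1⟩, ⟨e2, h2'⟩}
  have hs : s.card = 2 := by
    rw [Finset.card_insert_of_notMem, Finset.card_singleton]
    simp only [Finset.mem_singleton, Subtype.mk.injEq]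
    exact fun hq => d12 (congrArg Subtype.val hq)
  have huniv : s = Finset.univ := Finset.eq_univ_of_card s (hs.trans hc.symm)
  have : (⟨e, he⟩ : T) ∈ s := by rw [huniv]; exact Finset.mem_univ _
  simp only [s, Finset.mem_insert, Finset.mem_singleton, Subtype.mk.injEq] at this
  exact this
namespace Section7
variable (S : Section7)

instance : NeZero S.n := ⟨by have := S.hn; omega⟩

/-- The signed base labels. -/
def gam (i : ZMod S.n) : Zm 2 := S.aB (S.e i)

lemma two_ne' : (2 : ZMod S.n) ≠ 0 := by
  have hn := S.hn
  intro h
  have h2 : ((2 : ℕ) : ZMod S.n) = 0 := by exact_mod_cast h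
  rw [ZMod.natCast_eq_zero_iff] at h2
  exact absurd (Nat.le_of_dvd (by norm_num) h2) (by omega)

lemma v_inj : Function.Injective S.v := S.v_bij.1

lemma e_ne_rev (i : ZMod S.n) : S.e i ≠ S.B.rev (S.e (i - 1)) := by
  intro h
  have hd := congrArg S.B.dst h
  rw [S.dst_e, S.B.dst_rev, S.src_e] at hd
  have := S.v_inj hd
  apply S.two_ne'
  have : i + 1 - (i - 1) = 0 := by rw [← this]; ring
  calc (2 : ZMod S.n) = i + 1 - (i - 1) := by ring
  _ = 0 := this

lemma det_ne (i : ZMod S.n) :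
    (S.gam (i-1)) 0 * (S.gam i) 1 - (S.gam (i-1)) 1 * (S.gam i) 0 ≠ 0 := by
  rcases S.delzant i with h | h <;> rw [show S.gam (i-1) = S.aB (S.e (i-1)) from rfl,
    show S.gam i = S.aB (S.e i) from rfl, h] <;> omega

lemma base_rel (i : ZMod S.n) :
    ∃ c : ℤ, S.gam (i+1) = -S.gam (i-1) + c • S.gam i := by
  obtain ⟨hreg, hconn, CB, hcomp⟩ := S.hB
  -- edges at v i : e i and rev (e (i-1))
  have hsrc1 : S.B.src (S.B.rev (S.e (i-1))) = S.v i := by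
    rw [S.B.src_rev, S.dst_e]
    congr 1
    ring
  have hsrc1' : S.B.src (S.B.rev (S.e (i-1))) = S.B.src (S.e i) := by
    rw [hsrc1, S.src_e]
  set t := CB.t (S.e i) (S.B.rev (S.e (i-1))) with ht
  have hsrct : S.B.src t = S.v (i+1) := by
    rw [ht, CB.src_t _ _ hsrc1', S.dst_e]
  -- edges at v (i+1) : e (i+1) and rev (e i)
  have hs1 : S.B.src (S.e (i+1)) = S.v (i+1) := S.src_e _
  have hs2 : S.B.src (S.B.rev (S.e i)) = S.v (i+1) := by rw [S.B.src_rev, S.dst_e]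
  have hne : S.e (i+1) ≠ S.B.rev (S.e i) := by
    have := S.e_ne_rev (i+1)
    rwa [show i + 1 - 1 = i from by ring] at this
  have htwo := two_edges hreg hs1 hs2 hne t hsrct
  have htne : t ≠ S.B.rev (S.e i) := by
    intro h
    have h2 : t = CB.t (S.e i) (S.e i) := by rw [h, CB.t_self]
    have := CB.t_inj rfl hsrc1' h2.symm
    exact S.e_ne_rev i this
  have htt : t = S.e (i+1) := by tauto
  obtain ⟨c, hc⟩ := hcomp.2.1 (S.e i) (S.B.rev (S.e (i-1))) hsrc1'
  refine ⟨c, ?_⟩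
  rw [← ht, htt] at hc
  rw [show S.gam (i+1) = S.aB (S.e (i+1)) from rfl, hc, hcomp.2.2]
  rfl

/-! ### The vertices and edges of `Γ` -/

def pv (i : ZMod S.n) : S.G.V := S.G.src (S.f i)
def qv (i : ZMod S.n) : S.G.V := S.G.src (S.h i)

/-- The third edge at `pv i`. -/
noncomputable def b (i : ZMod S.n) : S.G.E :=
  if i = 0 then S.G.rev (S.h (i-1)) else S.G.rev (S.f (i-1))

/-- The third edge at `qv i`. -/
noncomputable def c (i : ZMod S.n) : S.G.E :=
  if i = 0 then S.G.rev (S.f (i-1)) else S.G.rev (S.h (i-1))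

lemma src_b (i : ZMod S.n) : S.G.src (S.b i) = S.pv i := by
  unfold b pv
  split_ifs with h
  · rw [S.G.src_rev, h]
    rw [show (0 : ZMod S.n) - 1 = -1 from by ring]
    exact S.twist_h
  · rw [S.G.src_rev]
    have := S.chain_f (i-1) (by rwa [sub_add_cancel])
    rwa [sub_add_cancel] at this

lemma src_c (i : ZMod S.n) : S.G.src (S.c i) = S.qv i := by
  unfold c qv
  split_ifs with h
  · rw [S.G.src_rev, h]
    rw [show (0 : ZMod S.n) - 1 = -1 from by ring]
    exact S.twist_f
  · rw [S.G.src_rev]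
    have := S.chain_h (i-1) (by rwa [sub_add_cancel])
    rwa [sub_add_cancel] at this

lemma b_horiz (i : ZMod S.n) : ¬ S.π.Vertical (S.b i) := by
  unfold b
  split_ifs <;> rw [S.π.vert_rev]
  · exact S.h_horiz _
  · exact S.f_horiz _

lemma c_horiz (i : ZMod S.n) : ¬ S.π.Vertical (S.c i) := by
  unfold c
  split_ifs <;> rw [S.π.vert_rev]
  · exact S.f_horiz _
  · exact S.h_horiz _

lemma onE_b (i : ZMod S.n) : S.π.onE (S.b i) = S.B.rev (S.e (i-1)) := by
  unfold b
  split_ifs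
  · rw [S.π.rev_onE _ (S.h_horiz _), S.h_over]
  · rw [S.π.rev_onE _ (S.f_horiz _), S.f_over]

lemma onE_c (i : ZMod S.n) : S.π.onE (S.c i) = S.B.rev (S.e (i-1)) := by
  unfold c
  split_ifs
  · rw [S.π.rev_onE _ (S.f_horiz _), S.f_over]
  · rw [S.π.rev_onE _ (S.h_horiz _), S.h_over]

lemma f_ne_g (i : ZMod S.n) : S.f i ≠ S.g i := by
  intro h
  exact S.f_horiz i (h ▸ S.g_vert i)

lemma b_ne_g (i : ZMod S.n) : S.b i ≠ S.g i := by
  intro h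
  exact S.b_horiz i (h ▸ S.g_vert i)

lemma f_ne_b (i : ZMod S.n) : S.f i ≠ S.b i := by
  intro h
  have := congrArg S.π.onE h
  rw [S.f_over, S.onE_b] at this
  exact S.e_ne_rev i this

lemma h_ne_revg (i : ZMod S.n) : S.h i ≠ S.G.rev (S.g i) := by
  intro h
  apply S.h_horiz i
  rw [h, S.π.vert_rev]
  exact S.g_vert i

lemma c_ne_revg (i : ZMod S.n) : S.c i ≠ S.G.rev (S.g i) := by
  intro h
  apply S.c_horiz i
  rw [h, S.π.vert_rev]
  exact S.g_vert i

lemma h_ne_c (i : ZMod S.n) : S.h i ≠ S.c i := by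
  intro h
  have := congrArg S.π.onE h
  rw [S.h_over, S.onE_c] at this
  exact S.e_ne_rev i this

lemma src_revg (i : ZMod S.n) : S.G.src (S.G.rev (S.g i)) = S.qv i := by
  rw [S.G.src_rev, S.g_dst]; rfl

lemma edges_at_p (i : ZMod S.n) :
    ∀ ed, S.G.src ed = S.pv i → ed = S.f i ∨ ed = S.g i ∨ ed = S.b i := by
  have h3 := S.hG.1
  exact three_edges h3 rfl (S.g_src i) (S.src_b i) (S.f_ne_g i) (S.f_ne_b i)
    (fun h => S.b_ne_g i h.symm)

lemma edges_at_q (i : ZMod S.n) :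
    ∀ ed, S.G.src ed = S.qv i → ed = S.h i ∨ ed = S.G.rev (S.g i) ∨ ed = S.c i := by
  have h3 := S.hG.1
  exact three_edges h3 rfl (S.src_revg i) (S.src_c i) (S.h_ne_revg i) (S.h_ne_c i)
    (fun h => S.c_ne_revg i h.symm)

end Section7
namespace Section7
variable (S : Section7)

lemma dst_f (i : ZMod S.n) :
    (i + 1 ≠ 0 → S.G.dst (S.f i) = S.pv (i+1)) ∧ (i + 1 = 0 → S.G.dst (S.f i) = S.qv 0) := by
  constructor
  · intro h
    exact S.chain_f i h
  · intro h
    have : i = -1 := by linear_combination h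
    rw [this]
    exact S.twist_f

lemma dst_h (i : ZMod S.n) :
    (i + 1 ≠ 0 → S.G.dst (S.h i) = S.qv (i+1)) ∧ (i + 1 = 0 → S.G.dst (S.h i) = S.pv 0) := by
  constructor
  · intro h
    exact S.chain_h i h
  · intro h
    have : i = -1 := by linear_combination h
    rw [this]
    exact S.twist_h

lemma vertex_cases (p : S.G.V) : ∃ i, p = S.pv i ∨ p = S.qv i := by
  obtain ⟨hreg, hconn, _⟩ := S.hG
  have hrel : Relation.ReflTransGen S.G.Adj (S.pv 0) p := hconn _ _
  induction hrel with
  | refl => exact ⟨0, Or.inl rfl⟩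
  | tail h1 h2 ih =>
    obtain ⟨i, hi⟩ := ih
    obtain ⟨ed, hsrc, hdst⟩ := h2
    rcases hi with hi | hi
    · rw [hi] at hsrc
      rcases S.edges_at_p i ed hsrc with h | h | h
      · subst h
        by_cases hz : i + 1 = 0
        · exact ⟨0, Or.inr (by rw [← hdst, (S.dst_f i).2 hz])⟩
        · exact ⟨i+1, Or.inl (by rw [← hdst, (S.dst_f i).1 hz])⟩
      · subst h
        exact ⟨i, Or.inr (by rw [← hdst, S.g_dst i]; rfl)⟩
      · subst h
        unfold b at hdst
        split_ifs at hdst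
        · exact ⟨i-1, Or.inr (by rw [← hdst, S.G.dst_rev]; rfl)⟩
        · exact ⟨i-1, Or.inl (by rw [← hdst, S.G.dst_rev]; rfl)⟩
    · rw [hi] at hsrc
      rcases S.edges_at_q i ed hsrc with h | h | h
      · subst h
        by_cases hz : i + 1 = 0
        · exact ⟨0, Or.inl (by rw [← hdst, (S.dst_h i).2 hz])⟩
        · exact ⟨i+1, Or.inr (by rw [← hdst, (S.dst_h i).1 hz])⟩
      · subst h
        refine ⟨i, Or.inl ?_⟩
        rw [← hdst, S.G.dst_rev, S.g_src]
        rfl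
      · subst h
        unfold c at hdst
        split_ifs at hdst
        · exact ⟨i-1, Or.inl (by rw [← hdst, S.G.dst_rev]; rfl)⟩
        · exact ⟨i-1, Or.inr (by rw [← hdst, S.G.dst_rev]; rfl)⟩

lemma edge_cases (ed : S.G.E) : ∃ i, ed = S.f i ∨ ed = S.h i ∨ ed = S.g i ∨
    ed = S.G.rev (S.f i) ∨ ed = S.G.rev (S.h i) ∨ ed = S.G.rev (S.g i) := by
  obtain ⟨i, hi | hi⟩ := S.vertex_cases (S.G.src ed)
  · rcases S.edges_at_p i ed hi with h | h | h
    · exact ⟨i, Or.inl h⟩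
    · exact ⟨i, Or.inr (Or.inr (Or.inl h))⟩
    · unfold b at h
      split_ifs at h
      · exact ⟨i-1, Or.inr (Or.inr (Or.inr (Or.inr (Or.inl h))))⟩
      · exact ⟨i-1, Or.inr (Or.inr (Or.inr (Or.inl h)))⟩
  · rcases S.edges_at_q i ed hi with h | h | h
    · exact ⟨i, Or.inr (Or.inl h)⟩
    · exact ⟨i, Or.inr (Or.inr (Or.inr (Or.inr (Or.inr h))))⟩
    · unfold c at h
      split_ifs at h
      · exact ⟨i-1, Or.inr (Or.inr (Or.inr (Or.inl h)))⟩
      · exact ⟨i-1, Or.inr (Or.inr (Or.inr (Or.inr (Or.inl h))))⟩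

end Section7
lemma unit_sq {x : ℤ} (h : x = 1 ∨ x = -1) : x * x = 1 := by
  rcases h with h | h <;> rw [h] <;> norm_num

lemma unit_nz {x : ℤ} (h : x = 1 ∨ x = -1) : x ≠ 0 := by
  rcases h with h | h <;> rw [h] <;> norm_num

lemma solve_zero {u a : ℤ} (hu : u * u = 1) (h : a * u = 0) : a = 0 := by
  have : a * (u * u) = 0 := by rw [← mul_assoc, h, zero_mul]
  rwa [hu, mul_one] at this

namespace Section7
variable (S : Section7)

/-- `μ_i`: `+1` at the jump index `j`, `-1` elsewhere. -/
def mu (j i : ZMod S.n) : ℤ := if i = j then 1 else -1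

lemma mu_unit (j i : ZMod S.n) : S.mu j i = 1 ∨ S.mu j i = -1 := by
  unfold mu; split_ifs <;> simp

/-- label of the third edge at `pv i`. -/
def lb (ζ : ZMod S.n → ℤ) (i : ZMod S.n) : ℤ := if i = 0 then ζ (i-1) else -ζ (i-1)

section Transport

variable (j : ZMod S.n) (α'' : S.G.E → Zm 2) (C : Connection S.G) (ζ σ : ZMod S.n → ℤ)

/-- The label of `b i`. -/
lemma lb_spec (hsc : SignedCompat S.G α'' C)
    (hζf : ∀ i, α'' (S.f i) = ζ i • S.gam i)
    (hζh : ∀ i, α'' (S.h i) = -(ζ i • S.gam i)) (i : ZMod S.n) :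
    α'' (S.b i) = S.lb ζ i • S.gam (i-1) := by
  unfold b lb
  split_ifs
  · rw [hsc.2.2, hζh, neg_neg]
  · rw [hsc.2.2, hζf, neg_smul]

lemma c_spec (hsc : SignedCompat S.G α'' C)
    (hζf : ∀ i, α'' (S.f i) = ζ i • S.gam i)
    (hζh : ∀ i, α'' (S.h i) = -(ζ i • S.gam i)) (i : ZMod S.n) :
    (i ≠ 0 → α'' (S.c i) = ζ (i-1) • S.gam (i-1)) ∧
    (i = 0 → α'' (S.c i) = -(ζ (i-1) • S.gam (i-1))) := by
  unfold c
  constructor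
  · intro h
    rw [if_neg h, hsc.2.2, hζh, neg_neg]
  · intro h
    rw [if_pos h, hsc.2.2, hζf]

/-- Transport along the fiber edge `g i` determines the relative signs of the
basic edges at levels `i-1` and `i`. -/
lemma Rg (hsc : SignedCompat S.G α'' C)
    (hζu : ∀ i, ζ i = 1 ∨ ζ i = -1) (hσu : ∀ i, σ i = 1 ∨ σ i = -1)
    (hζf : ∀ i, α'' (S.f i) = ζ i • S.gam i)
    (hζh : ∀ i, α'' (S.h i) = -(ζ i • S.gam i))
    (hσg : ∀ i, α'' (S.g i) = σ i • S.gam (i-1) + (σ i * S.mu j i) • S.gam i)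
    (i : ZMod S.n) :
    (i ≠ 0 → ζ (i-1) = -S.mu j i * ζ i) ∧ (i = 0 → ζ (i-1) = S.mu j i * ζ i) := by
  have hsrc : S.G.src (S.f i) = S.G.src (S.g i) := (S.g_src i).symm
  set e0 := C.t (S.g i) (S.f i) with he0
  have hsrc0 : S.G.src e0 = S.qv i := by
    rw [he0, C.src_t _ _ hsrc, S.g_dst]; rfl
  obtain ⟨cc, hcc⟩ := hsc.2.1 (S.g i) (S.f i) hsrc
  rw [← he0] at hcc
  have hR : α'' (S.f i) + cc • α'' (S.g i)
      = (cc * σ i) • S.gam (i-1) + (ζ i + cc * (σ i * S.mu j i)) • S.gam i := by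
    rw [hζf, hσg]; module
  rw [hR] at hcc
  have husq : σ i * σ i = 1 := unit_sq (hσu i)
  have hmsq : S.mu j i * S.mu j i = 1 := unit_sq (S.mu_unit j i)
  rcases S.edges_at_q i e0 hsrc0 with h | h | h
  · -- e0 = h i : impossible
    exfalso
    rw [h, hζh] at hcc
    have : (0:ℤ) • S.gam (i-1) + (-ζ i) • S.gam i
        = (cc * σ i) • S.gam (i-1) + (ζ i + cc * (σ i * S.mu j i)) • S.gam i := by
      rw [← hcc]; module
    obtain ⟨c1, c2⟩ := coeff_unique (S.det_ne i) this
    have hcz : cc * σ i = 0 := c1.symm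
    have : cc = 0 := solve_zero husq hcz
    rw [this] at c2
    have := unit_nz (hζu i)
    omega
  · -- e0 = rev (g i) : impossible
    exfalso
    have : S.f i = S.g i := by
      apply C.t_inj hsrc rfl
      rw [← he0, h, C.t_self]
    exact S.f_ne_g i this
  · -- e0 = c i
    rw [h] at hcc
    by_cases hz : i = 0
    · refine ⟨fun h' => absurd hz h', fun _ => ?_⟩
      rw [(S.c_spec α'' C ζ hsc hζf hζh i).2 hz] at hcc
      have : (-ζ (i-1)) • S.gam (i-1) + (0:ℤ) • S.gam i
          = (cc * σ i) • S.gam (i-1) + (ζ i + cc * (σ i * S.mu j i)) • S.gam i := by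
        rw [← hcc]; module
      obtain ⟨c1, c2⟩ := coeff_unique (S.det_ne i) this
      -- c1 : -ζ (i-1) = cc * σ i, c2 : 0 = ζ i + cc * (σ i * mu)
      have hx : cc * σ i = -(ζ i * S.mu j i) := by
        have h2 : cc * σ i * S.mu j i = -ζ i := by linarith [c2]
        have := congrArg (· * S.mu j i) h2
        rw [mul_assoc, hmsq, mul_one] at this
        linarith [this]
      rw [hx] at c1
      have := hmsq
      nlinarith [c1, hmsq]
    · refine ⟨fun _ => ?_, fun h' => absurd h' hz⟩
      rw [(S.c_spec α'' C ζ hsc hζf hζh i).1 hz] at hcc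
      have : (ζ (i-1)) • S.gam (i-1) + (0:ℤ) • S.gam i
          = (cc * σ i) • S.gam (i-1) + (ζ i + cc * (σ i * S.mu j i)) • S.gam i := by
        rw [← hcc]; module
      obtain ⟨c1, c2⟩ := coeff_unique (S.det_ne i) this
      have hx : cc * σ i = -(ζ i * S.mu j i) := by
        have h2 : cc * σ i * S.mu j i = -ζ i := by linarith [c2]
        have := congrArg (· * S.mu j i) h2
        rw [mul_assoc, hmsq, mul_one] at this
        linarith [this]
      rw [hx] at c1
      linarith [c1]

end Transport
end Section7
namespace Section7
variable (S : Section7)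

section Transport
variable (j : ZMod S.n) (α'' : S.G.E → Zm 2) (C : Connection S.G) (ζ σ : ZMod S.n → ℤ)

/-- Transport along the basic edge `f i`, non-twisted case. -/
lemma Rf (hsc : SignedCompat S.G α'' C)
    (hζu : ∀ i, ζ i = 1 ∨ ζ i = -1) (hσu : ∀ i, σ i = 1 ∨ σ i = -1)
    (hζf : ∀ i, α'' (S.f i) = ζ i • S.gam i)
    (hζh : ∀ i, α'' (S.h i) = -(ζ i • S.gam i))
    (hσg : ∀ i, α'' (S.g i) = σ i • S.gam (i-1) + (σ i * S.mu j i) • S.gam i)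
    (i : ZMod S.n) (hnz : i + 1 ≠ 0) :
    (σ i = -ζ (i+1) ∧ σ (i+1) * S.mu j (i+1) = -S.lb ζ i) ∨
    (σ (i+1) * S.mu j (i+1) = -σ i ∧ ζ (i+1) = -S.lb ζ i) := by
  obtain ⟨cB, hcB⟩ := S.base_rel i
  have hrevb : S.b (i+1) = S.G.rev (S.f i) := by
    unfold b
    rw [if_neg hnz, show i + 1 - 1 = i from by ring]
  have hdst : S.G.dst (S.f i) = S.pv (i+1) := (S.dst_f i).1 hnz
  have hsrcg : S.G.src (S.g i) = S.G.src (S.f i) := S.g_src i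
  have hsrcb : S.G.src (S.b i) = S.G.src (S.f i) := S.src_b i
  -- normalized label of g (i+1)
  have hgi1 : α'' (S.g (i+1)) = (-(σ (i+1) * S.mu j (i+1))) • S.gam (i-1)
      + (σ (i+1) + σ (i+1) * S.mu j (i+1) * cB) • S.gam i := by
    have := hσg (i+1)
    rw [show i + 1 - 1 = i from by ring, hcB] at this
    rw [this]; module
  have hfi1 : α'' (S.f (i+1)) = (-ζ (i+1)) • S.gam (i-1) + (ζ (i+1) * cB) • S.gam i := by
    rw [hζf, hcB]; module
  -- transport of g i
  set e1 := C.t (S.f i) (S.g i) with he1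
  have hsrc1 : S.G.src e1 = S.pv (i+1) := by rw [he1, C.src_t _ _ hsrcg, hdst]
  have he1ne : e1 ≠ S.b (i+1) := by
    rw [hrevb]
    intro h
    exact S.f_ne_g i (C.t_inj hsrcg rfl (by rw [← he1, h, C.t_self])).symm
  obtain ⟨cc, hcc⟩ := hsc.2.1 (S.f i) (S.g i) hsrcg
  rw [← he1] at hcc
  have hccR : α'' e1 = (σ i) • S.gam (i-1) + (σ i * S.mu j i + cc * ζ i) • S.gam i := by
    rw [hcc, hσg, hζf]; module
  -- transport of b i
  set e2 := C.t (S.f i) (S.b i) with he2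
  have hsrc2 : S.G.src e2 = S.pv (i+1) := by rw [he2, C.src_t _ _ hsrcb, hdst]
  have he2ne : e2 ≠ S.b (i+1) := by
    rw [hrevb]
    intro h
    exact S.f_ne_b i (C.t_inj hsrcb rfl (by rw [← he2, h, C.t_self])).symm
  have he12 : e1 ≠ e2 := by
    intro h
    have : S.g i = S.b i := C.t_inj hsrcg hsrcb (by rw [← he1, ← he2, h])
    exact S.b_ne_g i this.symm
  obtain ⟨dd, hdd⟩ := hsc.2.1 (S.f i) (S.b i) hsrcb
  rw [← he2] at hdd
  have hddR : α'' e2 = (S.lb ζ i) • S.gam (i-1) + (dd * ζ i) • S.gam i := by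
    rw [hdd, S.lb_spec α'' C ζ hsc hζf hζh i, hζf]; module
  rcases S.edges_at_p (i+1) e1 hsrc1 with h1 | h1 | h1
  · -- e1 = f (i+1)
    left
    have key : (-ζ (i+1)) • S.gam (i-1) + (ζ (i+1) * cB) • S.gam i
        = (σ i) • S.gam (i-1) + (σ i * S.mu j i + cc * ζ i) • S.gam i := by
      rw [← hfi1, ← h1, hccR]
    obtain ⟨c1, _⟩ := coeff_unique (S.det_ne i) key
    refine ⟨by linarith, ?_⟩
    -- then e2 = g (i+1)
    have h2 : e2 = S.g (i+1) := by
      rcases S.edges_at_p (i+1) e2 hsrc2 with h | h | h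
      · exact absurd (h1 ▸ h) (fun hq => he12 hq.symm)
      · exact h
      · exact absurd h he2ne
    have key2 : (-(σ (i+1) * S.mu j (i+1))) • S.gam (i-1)
        + (σ (i+1) + σ (i+1) * S.mu j (i+1) * cB) • S.gam i
        = (S.lb ζ i) • S.gam (i-1) + (dd * ζ i) • S.gam i := by
      rw [← hgi1, ← h2, hddR]
    obtain ⟨c1', _⟩ := coeff_unique (S.det_ne i) key2
    linarith
  · -- e1 = g (i+1)
    right
    have key : (-(σ (i+1) * S.mu j (i+1))) • S.gam (i-1)
        + (σ (i+1) + σ (i+1) * S.mu j (i+1) * cB) • S.gam i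
        = (σ i) • S.gam (i-1) + (σ i * S.mu j i + cc * ζ i) • S.gam i := by
      rw [← hgi1, ← h1, hccR]
    obtain ⟨c1, _⟩ := coeff_unique (S.det_ne i) key
    refine ⟨by linarith, ?_⟩
    -- then e2 = f (i+1)
    have h2 : e2 = S.f (i+1) := by
      rcases S.edges_at_p (i+1) e2 hsrc2 with h | h | h
      · exact h
      · exact absurd (h1 ▸ h) (fun hq => he12 hq.symm)
      · exact absurd h he2ne
    have key2 : (-ζ (i+1)) • S.gam (i-1) + (ζ (i+1) * cB) • S.gam i
        = (S.lb ζ i) • S.gam (i-1) + (dd * ζ i) • S.gam i := by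
      rw [← hfi1, ← h2, hddR]
    obtain ⟨c1', _⟩ := coeff_unique (S.det_ne i) key2
    linarith
  · exact absurd h1 he1ne

/-- Transport along the basic edge `f i`, twisted case. -/
lemma Rf' (hsc : SignedCompat S.G α'' C)
    (hζu : ∀ i, ζ i = 1 ∨ ζ i = -1) (hσu : ∀ i, σ i = 1 ∨ σ i = -1)
    (hζf : ∀ i, α'' (S.f i) = ζ i • S.gam i)
    (hζh : ∀ i, α'' (S.h i) = -(ζ i • S.gam i))
    (hσg : ∀ i, α'' (S.g i) = σ i • S.gam (i-1) + (σ i * S.mu j i) • S.gam i)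
    (i : ZMod S.n) (hz : i + 1 = 0) :
    (σ i = ζ (i+1) ∧ σ (i+1) * S.mu j (i+1) = S.lb ζ i) ∨
    (σ (i+1) * S.mu j (i+1) = σ i ∧ ζ (i+1) = S.lb ζ i) := by
  obtain ⟨cB, hcB⟩ := S.base_rel i
  have hrevc : S.c (i+1) = S.G.rev (S.f i) := by
    unfold c
    rw [if_pos hz, show i + 1 - 1 = i from by ring]
  have hdst : S.G.dst (S.f i) = S.qv (i+1) := by
    rw [hz]
    exact (S.dst_f i).2 hz
  have hsrcg : S.G.src (S.g i) = S.G.src (S.f i) := S.g_src i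
  have hsrcb : S.G.src (S.b i) = S.G.src (S.f i) := S.src_b i
  have hgi1 : α'' (S.G.rev (S.g (i+1))) = (σ (i+1) * S.mu j (i+1)) • S.gam (i-1)
      + (-σ (i+1) - σ (i+1) * S.mu j (i+1) * cB) • S.gam i := by
    rw [hsc.2.2]
    have := hσg (i+1)
    rw [show i + 1 - 1 = i from by ring, hcB] at this
    rw [this]; module
  have hhi1 : α'' (S.h (i+1)) = (ζ (i+1)) • S.gam (i-1) + (-(ζ (i+1) * cB)) • S.gam i := by
    rw [hζh, hcB]; module
  set e1 := C.t (S.f i) (S.g i) with he1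
  have hsrc1 : S.G.src e1 = S.qv (i+1) := by rw [he1, C.src_t _ _ hsrcg, hdst]
  have he1ne : e1 ≠ S.c (i+1) := by
    rw [hrevc]
    intro h
    exact S.f_ne_g i (C.t_inj hsrcg rfl (by rw [← he1, h, C.t_self])).symm
  obtain ⟨cc, hcc⟩ := hsc.2.1 (S.f i) (S.g i) hsrcg
  rw [← he1] at hcc
  have hccR : α'' e1 = (σ i) • S.gam (i-1) + (σ i * S.mu j i + cc * ζ i) • S.gam i := by
    rw [hcc, hσg, hζf]; module
  set e2 := C.t (S.f i) (S.b i) with he2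
  have hsrc2 : S.G.src e2 = S.qv (i+1) := by rw [he2, C.src_t _ _ hsrcb, hdst]
  have he2ne : e2 ≠ S.c (i+1) := by
    rw [hrevc]
    intro h
    exact S.f_ne_b i (C.t_inj hsrcb rfl (by rw [← he2, h, C.t_self])).symm
  have he12 : e1 ≠ e2 := by
    intro h
    have : S.g i = S.b i := C.t_inj hsrcg hsrcb (by rw [← he1, ← he2, h])
    exact S.b_ne_g i this.symm
  obtain ⟨dd, hdd⟩ := hsc.2.1 (S.f i) (S.b i) hsrcb
  rw [← he2] at hdd
  have hddR : α'' e2 = (S.lb ζ i) • S.gam (i-1) + (dd * ζ i) • S.gam i := by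
    rw [hdd, S.lb_spec α'' C ζ hsc hζf hζh i, hζf]; module
  rcases S.edges_at_q (i+1) e1 hsrc1 with h1 | h1 | h1
  · -- e1 = h (i+1)
    left
    have key : (ζ (i+1)) • S.gam (i-1) + (-(ζ (i+1) * cB)) • S.gam i
        = (σ i) • S.gam (i-1) + (σ i * S.mu j i + cc * ζ i) • S.gam i := by
      rw [← hhi1, ← h1, hccR]
    obtain ⟨c1, _⟩ := coeff_unique (S.det_ne i) key
    refine ⟨by linarith, ?_⟩
    have h2 : e2 = S.G.rev (S.g (i+1)) := by
      rcases S.edges_at_q (i+1) e2 hsrc2 with h | h | h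
      · exact absurd (h1 ▸ h) (fun hq => he12 hq.symm)
      · exact h
      · exact absurd h he2ne
    have key2 : (σ (i+1) * S.mu j (i+1)) • S.gam (i-1)
        + (-σ (i+1) - σ (i+1) * S.mu j (i+1) * cB) • S.gam i
        = (S.lb ζ i) • S.gam (i-1) + (dd * ζ i) • S.gam i := by
      rw [← hgi1, ← h2, hddR]
    obtain ⟨c1', _⟩ := coeff_unique (S.det_ne i) key2
    linarith
  · -- e1 = rev (g (i+1))
    right
    have key : (σ (i+1) * S.mu j (i+1)) • S.gam (i-1)
        + (-σ (i+1) - σ (i+1) * S.mu j (i+1) * cB) • S.gam i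
        = (σ i) • S.gam (i-1) + (σ i * S.mu j i + cc * ζ i) • S.gam i := by
      rw [← hgi1, ← h1, hccR]
    obtain ⟨c1, _⟩ := coeff_unique (S.det_ne i) key
    refine ⟨by linarith, ?_⟩
    have h2 : e2 = S.h (i+1) := by
      rcases S.edges_at_q (i+1) e2 hsrc2 with h | h | h
      · exact h
      · exact absurd (h1 ▸ h) (fun hq => he12 hq.symm)
      · exact absurd h he2ne
    have key2 : (ζ (i+1)) • S.gam (i-1) + (-(ζ (i+1) * cB)) • S.gam i
        = (S.lb ζ i) • S.gam (i-1) + (dd * ζ i) • S.gam i := by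
      rw [← hhi1, ← h2, hddR]
    obtain ⟨c1', _⟩ := coeff_unique (S.det_ne i) key2
    linarith
  · exact absurd h1 he1ne

end Transport
end Section7
namespace Section7
variable (S : Section7)

lemma castval (m : ℕ) (hm : m < S.n) : ((m : ZMod S.n)).val = m := ZMod.val_cast_of_lt hm

lemma cast_j (j : ZMod S.n) : ((j.val : ℕ) : ZMod S.n) = j := by
  rw [ZMod.natCast_val, ZMod.cast_id]

lemma cast_ne_zero (m : ℕ) (h1 : 1 ≤ m) (hm : m < S.n) : (m : ZMod S.n) ≠ 0 := by
  intro h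
  have := S.castval m hm
  rw [h] at this
  simp [ZMod.val_zero] at this
  omega

lemma cast_sub_one (m : ℕ) : ((m+1 : ℕ) : ZMod S.n) - 1 = (m : ZMod S.n) := by
  push_cast
  ring

lemma cast_eq_j_iff (m : ℕ) (hm : m < S.n) (j : ZMod S.n) :
    (m : ZMod S.n) = j ↔ m = j.val := by
  constructor
  · intro h
    rw [← S.castval m hm, h]
  · intro h
    rw [h, S.cast_j]

lemma val_lt (i : ZMod S.n) : i.val < S.n := ZMod.val_lt i

/-- `ε_i`: the sign pattern of the basic edges `f i`. -/
def epsf (j i : ZMod S.n) : ℤ := if i.val < j.val then -1 else 1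

/-- the claimed signs of the fiber edges. -/
def sgt (j i : ZMod S.n) : ℤ := if i.val ≤ j.val then -1 else 1

lemma epsf_unit (j i : ZMod S.n) : S.epsf j i = 1 ∨ S.epsf j i = -1 := by
  unfold epsf; split_ifs <;> simp

lemma sgt_unit (j i : ZMod S.n) : S.sgt j i = 1 ∨ S.sgt j i = -1 := by
  unfold sgt; split_ifs <;> simp

lemma one_ne_zero' : (1 : ZMod S.n) ≠ 0 := by
  have := S.cast_ne_zero 1 le_rfl (by have := S.hn; omega)
  simpa using this

lemma cast_n : ((S.n : ℕ) : ZMod S.n) = 0 := ZMod.natCast_self S.n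

lemma cast_pred (m : ℕ) (h : 1 ≤ m) : ((m : ℕ) : ZMod S.n) - 1 = ((m - 1 : ℕ) : ZMod S.n) := by
  rw [show m = (m - 1) + 1 from by omega, S.cast_sub_one]
  norm_num

lemma zero_sub_one : (0 : ZMod S.n) - 1 = ((S.n - 1 : ℕ) : ZMod S.n) := by
  have := S.cast_pred S.n (by have := S.hn; omega)
  rw [S.cast_n] at this
  exact this

lemma cast_nsub1_add1 : ((S.n - 1 : ℕ) : ZMod S.n) + 1 = 0 := by
  have h1 : ((S.n - 1 : ℕ) : ZMod S.n) + 1 = ((S.n - 1 + 1 : ℕ) : ZMod S.n) := by push_cast; ring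
  rw [h1, show S.n - 1 + 1 = S.n from by (have := S.hn; omega), S.cast_n]

lemma succ_ne (i : ZMod S.n) : i + 1 ≠ i := by
  intro h
  apply S.one_ne_zero'
  linear_combination h

section Master
variable (j : ZMod S.n) (ζ σ : ZMod S.n → ℤ)

/-- The master sign-determination lemma. -/
lemma master
    (hζu : ∀ i, ζ i = 1 ∨ ζ i = -1) (hσu : ∀ i, σ i = 1 ∨ σ i = -1)
    (hRg : ∀ i, (i ≠ 0 → ζ (i-1) = -S.mu j i * ζ i) ∧ (i = 0 → ζ (i-1) = S.mu j i * ζ i))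
    (hRf : ∀ i, i + 1 ≠ 0 →
      (σ i = -ζ (i+1) ∧ σ (i+1) * S.mu j (i+1) = -S.lb ζ i) ∨
      (σ (i+1) * S.mu j (i+1) = -σ i ∧ ζ (i+1) = -S.lb ζ i))
    (hRf' : ∀ i, i + 1 = 0 →
      (σ i = ζ (i+1) ∧ σ (i+1) * S.mu j (i+1) = S.lb ζ i) ∨
      (σ (i+1) * S.mu j (i+1) = σ i ∧ ζ (i+1) = S.lb ζ i)) :
    ∃ u : ℤ, (u = 1 ∨ u = -1) ∧ (∀ i, ζ i = u * S.epsf j i) ∧ (∀ i, σ i = u * S.sgt j i) := by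
  have hn := S.hn
  have hJn : j.val < S.n := S.val_lt j
  set u := ζ j with hu
  have huu : u = 1 ∨ u = -1 := hζu j
  have hunz : u ≠ 0 := unit_nz huu
  refine ⟨u, huu, ?_⟩
  -- the value of ζ above the jump
  have hup : ∀ d : ℕ, j.val + d < S.n → ζ ((j.val + d : ℕ) : ZMod S.n) = u := by
    intro d
    induction d with
    | zero => intro _; rw [show j.val + 0 = j.val from rfl, S.cast_j]
    | succ d ih =>
      intro hdn
      have hd' : j.val + d < S.n := by omega
      have ih' := ih hd'
      have hne0 : ((j.val + d + 1 : ℕ) : ZMod S.n) ≠ 0 := S.cast_ne_zero _ (by omega) hdn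
      have hnej : ((j.val + d + 1 : ℕ) : ZMod S.n) ≠ j := by
        intro hq
        rw [S.cast_eq_j_iff _ (by omega)] at hq
        omega
      have hrel := (hRg ((j.val + d + 1 : ℕ) : ZMod S.n)).1 hne0
      rw [S.cast_sub_one (j.val + d)] at hrel
      unfold mu at hrel
      rw [if_neg hnej] at hrel
      rw [show (((j.val:ℕ) + (d+1) : ℕ) : ZMod S.n) = ((j.val + d + 1 : ℕ) : ZMod S.n) from by norm_cast]
      rw [hrel] at ih'
      linarith
  -- the value of ζ below the jump
  have hdown : ∀ d : ℕ, d ≤ j.val → ζ ((j.val - d : ℕ) : ZMod S.n) = (if d = 0 then u else -u) := by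
    intro d
    induction d with
    | zero => intro _; simp [S.cast_j, hu]
    | succ d ih =>
      intro hdJ
      have ih' := ih (by omega)
      have h1n : j.val - d < S.n := by omega
      have hne0 : ((j.val - d : ℕ) : ZMod S.n) ≠ 0 := S.cast_ne_zero _ (by omega) h1n
      have hrel := (hRg ((j.val - d : ℕ) : ZMod S.n)).1 hne0
      have hsub : ((j.val - d : ℕ) : ZMod S.n) - 1 = ((j.val - (d+1) : ℕ) : ZMod S.n) := by
        rw [show j.val - d = (j.val - (d+1)) + 1 from by omega]
        exact S.cast_sub_one _
      rw [hsub] at hrel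
      by_cases hd0 : d = 0
      · subst hd0
        have hjj : ((j.val - 0 : ℕ) : ZMod S.n) = j := by simp [S.cast_j]
        rw [hjj] at hrel
        unfold mu at hrel
        rw [if_pos rfl] at hrel
        simp only [if_pos rfl] at ih'
        rw [if_neg (by omega)]
        rw [hrel, ← hu]
        ring
      · have hnej : ((j.val - d : ℕ) : ZMod S.n) ≠ j := by
          intro hq
          rw [S.cast_eq_j_iff _ h1n j] at hq
          omega
        unfold mu at hrel
        rw [if_neg hnej] at hrel
        rw [if_neg hd0] at ih'
        rw [if_neg (by omega), hrel]
        linarith [ih']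
  -- ζ in terms of m
  have hζm : ∀ m : ℕ, m < S.n → ζ ((m : ℕ) : ZMod S.n) = (if m < j.val then -u else u) := by
    intro m hm
    by_cases hmJ : m < j.val
    · have := hdown (j.val - m) (by omega)
      rw [show j.val - (j.val - m) = m from by omega, if_neg (by omega)] at this
      rw [this, if_pos hmJ]
    · have := hup (m - j.val) (by omega)
      rw [show j.val + (m - j.val) = m from by omega] at this
      rw [this, if_neg hmJ]
  have hζi : ∀ i, ζ i = u * S.epsf j i := by
    intro i
    have := hζm i.val (S.val_lt i)
    rw [show ((i.val : ℕ) : ZMod S.n) = i from S.cast_j i] at this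
    unfold epsf
    rw [this]
    split_ifs <;> ring
  refine ⟨hζi, ?_⟩
  have hmne : ∀ i : ZMod S.n, i ≠ j → S.mu j i = -1 := by
    intro i hi; unfold mu; rw [if_neg hi]
  have hcast0 : ((0 : ℕ) : ZMod S.n) = 0 := by norm_num
  have hj0 : (j = 0) ↔ (j.val = 0) := by
    constructor
    · intro h; rw [h, ZMod.val_zero]
    · intro h; rw [← S.cast_j j, h, hcast0]
  -- anchor at the jump
  have hanchor : σ j = -u ∧ σ 0 = -u ∧
      (j.val + 1 < S.n → σ ((j.val + 1 : ℕ) : ZMod S.n) = u) := by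
    by_cases hB : j.val = S.n - 1
    · -- twisted anchor
      have hjn0 : j ≠ 0 := by intro hq; have := hj0.mp hq; omega
      have hjcast : j = ((S.n - 1 : ℕ) : ZMod S.n) := by rw [← S.cast_j j, hB]
      have hz : j + 1 = 0 := by rw [hjcast]; exact S.cast_nsub1_add1
      have hζ01 : ζ (j + 1) = -u := by
        rw [hz, ← hcast0, hζm 0 (by omega), if_pos (by omega)]
      have hlbj : S.lb ζ j = u := by
        unfold lb
        rw [if_neg hjn0, hjcast, S.cast_pred (S.n-1) (by omega),
          hζm (S.n - 1 - 1) (by omega), if_pos (by omega)]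
        ring
      rcases hRf' j hz with ⟨ha, hb⟩ | ⟨ha, hb⟩
      · refine ⟨by rw [ha, hζ01], ?_, fun hq => absurd hq (by omega)⟩
        rw [hz, hmne 0 (fun hq => hjn0 hq.symm), hlbj] at hb
        linarith
      · exfalso
        rw [hζ01, hlbj] at hb
        apply hunz
        linarith
    · -- untwisted anchor at j
      have hAn : j.val + 1 < S.n := by omega
      have hj1cast : j + 1 = ((j.val + 1 : ℕ) : ZMod S.n) := by
        nth_rewrite 1 [← S.cast_j j]
        push_cast
        ring
      have hnz : j + 1 ≠ 0 := by
        rw [hj1cast]; exact S.cast_ne_zero _ (by omega) hAn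
      have hζ1 : ζ (j + 1) = u := by
        rw [hj1cast, hζm _ hAn, if_neg (by omega)]
      have hlbj : S.lb ζ j = u := by
        unfold lb
        by_cases hj0' : j = 0
        · rw [if_pos hj0', hj0', zero_sub, show -(1 : ZMod S.n) = (0:ZMod S.n) - 1 from by ring,
            S.zero_sub_one, hζm _ (by omega), if_neg ?_]
          have hJ0 : j.val = 0 := hj0.mp hj0'
          omega
        · have hJ1 : 1 ≤ j.val := by
            rcases Nat.eq_zero_or_pos j.val with hzz | hzz
            · exact absurd (hj0.mpr hzz) hj0'
            · omega
          rw [if_neg hj0', ← S.cast_j j, S.cast_pred j.val hJ1, hζm _ (by omega),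
            if_pos (by omega)]
          ring
      have hmu1 : S.mu j (j + 1) = -1 := hmne _ (S.succ_ne j)
      rcases hRf j hnz with ⟨ha, hb⟩ | ⟨ha, hb⟩
      · have hσj : σ j = -u := by rw [ha, hζ1]
        have hσj1 : σ ((j.val + 1 : ℕ) : ZMod S.n) = u := by
          rw [hmu1, hlbj] at hb
          rw [← hj1cast]
          linarith
        refine ⟨hσj, ?_, fun _ => hσj1⟩
        -- the value at 0
        by_cases hj0' : j = 0
        · rw [← hj0']; exact hσj
        · have hJ1 : 1 ≤ j.val := by
            rcases Nat.eq_zero_or_pos j.val with hzz | hzz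
            · exact absurd (hj0.mpr hzz) hj0'
            · omega
          -- up induction to n-1
          have hupσ : ∀ d : ℕ, j.val + 1 + d < S.n → σ ((j.val + 1 + d : ℕ) : ZMod S.n) = u := by
            intro d
            induction d with
            | zero =>
              intro _
              rw [show j.val + 1 + 0 = j.val + 1 from rfl]
              exact hσj1
            | succ d ih =>
              intro hd
              have ih' := ih (by omega)
              have hcast2 : ((j.val + 1 + d : ℕ) : ZMod S.n) + 1
                  = ((j.val + 1 + (d+1) : ℕ) : ZMod S.n) := by push_cast; ring
              have hnz2 : ((j.val + 1 + d : ℕ) : ZMod S.n) + 1 ≠ 0 := by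
                rw [hcast2]; exact S.cast_ne_zero _ (by omega) (by omega)
              have hζ2 : ζ (((j.val + 1 + d : ℕ) : ZMod S.n) + 1) = u := by
                rw [hcast2, hζm _ (by omega), if_neg (by omega)]
              have hmu2 : S.mu j (((j.val + 1 + d : ℕ) : ZMod S.n) + 1) = -1 := by
                apply hmne
                rw [hcast2]
                intro hq
                rw [S.cast_eq_j_iff _ (by omega) j] at hq
                omega
              rcases hRf _ hnz2 with ⟨ha2, hb2⟩ | ⟨ha2, hb2⟩
              · exfalso
                rw [ih', hζ2] at ha2
                apply hunz; linarith
              · rw [hmu2, ih'] at ha2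
                rw [← hcast2]
                linarith
          have hσn1 : σ ((S.n - 1 : ℕ) : ZMod S.n) = u := by
            have := hupσ (S.n - 1 - (j.val + 1)) (by omega)
            rw [show j.val + 1 + (S.n - 1 - (j.val + 1)) = S.n - 1 from by omega] at this
            exact this
          have hz : ((S.n - 1 : ℕ) : ZMod S.n) + 1 = 0 := S.cast_nsub1_add1
          have hζ0 : ζ (((S.n - 1 : ℕ) : ZMod S.n) + 1) = -u := by
            rw [hz, ← hcast0, hζm 0 (by omega), if_pos (by omega)]
          have hmu0 : S.mu j (((S.n - 1 : ℕ) : ZMod S.n) + 1) = -1 := by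
            apply hmne
            rw [hz]
            intro hq
            exact hj0' hq.symm
          rcases hRf' _ hz with ⟨ha2, hb2⟩ | ⟨ha2, hb2⟩
          · exfalso
            rw [hσn1, hζ0] at ha2
            apply hunz; linarith
          · rw [hσn1, hz] at ha2
            rw [hmne 0 (fun hq => hj0' hq.symm)] at ha2
            linarith
      · exfalso
        rw [hζ1, hlbj] at hb
        apply hunz; linarith
  -- global up induction
  have hupσ2 : ∀ d : ℕ, j.val + 1 + d < S.n → σ ((j.val + 1 + d : ℕ) : ZMod S.n) = u := by
    intro d
    induction d with
    | zero =>
      intro hd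
      rw [show j.val + 1 + 0 = j.val + 1 from rfl]
      exact hanchor.2.2 (by omega)
    | succ d ih =>
      intro hd
      have ih' := ih (by omega)
      have hcast2 : ((j.val + 1 + d : ℕ) : ZMod S.n) + 1
          = ((j.val + 1 + (d+1) : ℕ) : ZMod S.n) := by push_cast; ring
      have hnz2 : ((j.val + 1 + d : ℕ) : ZMod S.n) + 1 ≠ 0 := by
        rw [hcast2]; exact S.cast_ne_zero _ (by omega) (by omega)
      have hζ2 : ζ (((j.val + 1 + d : ℕ) : ZMod S.n) + 1) = u := by
        rw [hcast2, hζm _ (by omega), if_neg (by omega)]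
      have hmu2 : S.mu j (((j.val + 1 + d : ℕ) : ZMod S.n) + 1) = -1 := by
        apply hmne
        rw [hcast2]
        intro hq
        rw [S.cast_eq_j_iff _ (by omega) j] at hq
        omega
      rcases hRf _ hnz2 with ⟨ha2, hb2⟩ | ⟨ha2, hb2⟩
      · exfalso
        rw [ih', hζ2] at ha2
        apply hunz; linarith
      · rw [hmu2, ih'] at ha2
        rw [← hcast2]
        linarith
  -- low induction
  have hlowσ : ∀ m : ℕ, m < j.val → σ ((m : ℕ) : ZMod S.n) = -u := by
    intro m
    induction m with
    | zero => intro _; rw [hcast0]; exact hanchor.2.1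
    | succ m ih =>
      intro hm
      have ih' := ih (by omega)
      have hcast2 : ((m : ℕ) : ZMod S.n) + 1 = ((m + 1 : ℕ) : ZMod S.n) := by push_cast; ring
      have hnz2 : ((m : ℕ) : ZMod S.n) + 1 ≠ 0 := by
        rw [hcast2]; exact S.cast_ne_zero _ (by omega) (by omega)
      have hζ2 : ζ (((m : ℕ) : ZMod S.n) + 1) = -u := by
        rw [hcast2, hζm _ (by omega), if_pos (by omega)]
      have hmu2 : S.mu j (((m : ℕ) : ZMod S.n) + 1) = -1 := by
        apply hmne
        rw [hcast2]
        intro hq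
        rw [S.cast_eq_j_iff _ (by omega) j] at hq
        omega
      rcases hRf _ hnz2 with ⟨ha2, hb2⟩ | ⟨ha2, hb2⟩
      · exfalso
        rw [ih', hζ2] at ha2
        apply hunz; linarith
      · rw [hmu2, ih'] at ha2
        rw [← hcast2]
        linarith
  -- assemble
  intro i
  unfold sgt
  have hiv := S.val_lt i
  by_cases hle : i.val ≤ j.val
  · rw [if_pos hle]
    by_cases heq : i.val = j.val
    · have : i = j := by
        rw [← S.cast_j i, ← S.cast_j j, heq]
      rw [this, hanchor.1]
      ring
    · have := hlowσ i.val (by omega)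
      rw [S.cast_j i] at this
      rw [this]
      ring
  · rw [if_neg hle]
    have := hupσ2 (i.val - j.val - 1) (by omega)
    rw [show j.val + 1 + (i.val - j.val - 1) = i.val from by omega, S.cast_j i] at this
    rw [this]
    ring

end Master
end Section7
namespace Section7
variable (S : Section7)

lemma gam_nz (i : ZMod S.n) : S.gam i ≠ 0 := by
  intro h
  apply S.det_ne i
  rw [h]
  simp

lemma gam_nz' (i : ZMod S.n) : S.gam (i-1) ≠ 0 := by
  intro h
  apply S.det_ne i
  rw [h]
  simp

lemma smul_cancel {v : Zm 2} (hv : v ≠ 0) {a b : ℤ} (h : a • v = b • v) : a = b := by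
  by_contra hab
  apply hv
  funext x
  have hx := congrFun h x
  simp only [Pi.smul_apply, smul_eq_mul] at hx
  have : (a - b) * v x = 0 := by linarith
  rcases mul_eq_zero.mp this with h' | h'
  · exact absurd (by linarith) hab
  · simp [h']

lemma aG_f (i : ZMod S.n) : S.aG (S.f i) = S.gam i := by
  obtain ⟨hfib, C0, CB0, hsc0, hscB0, hcp⟩ := S.hfib
  rw [hcp.1 (S.f i) (S.f_horiz i), S.f_over]
  rfl

lemma aG_h (i : ZMod S.n) : S.aG (S.h i) = S.gam i := by
  obtain ⟨hfib, C0, CB0, hsc0, hscB0, hcp⟩ := S.hfib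
  rw [hcp.1 (S.h i) (S.h_horiz i), S.h_over]
  rfl

section An
variable (j : ZMod S.n)

lemma kappa (hk1 : ∀ i, S.k i = 1 ∨ S.k i = -1)
    (hj : S.k j ≠ (if j = 0 then - S.k (j - 1) else S.k (j - 1)))
    (hjuniq : ∀ i, i ≠ j → S.k i = (if i = 0 then - S.k (i - 1) else S.k (i - 1)))
    (i : ZMod S.n) :
    (if i = 0 then - S.k (i - 1) else S.k (i - 1)) = -(S.mu j i) * S.k i := by
  by_cases hij : i = j
  · subst hij
    unfold mu
    rw [if_pos rfl]
    rcases hk1 i with h1 | h1 <;> rcases hk1 (i-1) with h2 | h2 <;>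
      split_ifs at hj ⊢ <;> omega
  · unfold mu
    rw [if_neg hij]
    have := hjuniq i hij
    omega

lemma aG_g (hk1 : ∀ i, S.k i = 1 ∨ S.k i = -1)
    (hj : S.k j ≠ (if j = 0 then - S.k (j - 1) else S.k (j - 1)))
    (hjuniq : ∀ i, i ≠ j → S.k i = (if i = 0 then - S.k (i - 1) else S.k (i - 1)))
    (i : ZMod S.n) :
    S.aG (S.g i) = S.k i • S.gam (i-1) + (S.k i * S.mu j i) • S.gam i := by
  have := S.fiberweight i
  rw [S.kappa j hk1 hj hjuniq i] at this
  rw [this]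
  show S.k i • S.gam (i - 1) - (-S.mu j i * S.k i) • S.gam i = _
  module

/-- Full analysis of a signed structure inducing the same unsigned GKM graph. -/
lemma analyze (hk1 : ∀ i, S.k i = 1 ∨ S.k i = -1)
    (hj : S.k j ≠ (if j = 0 then - S.k (j - 1) else S.k (j - 1)))
    (hjuniq : ∀ i, i ≠ j → S.k i = (if i = 0 then - S.k (i - 1) else S.k (i - 1)))
    (α'' : S.G.E → Zm 2)
    (hcompat : ∃ C : Connection S.G, SignedCompat S.G α'' C)
    (hsame : ∀ ed, pm (α'' ed) = pm (S.aG ed))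
    (hne : ∀ i, α'' (S.f i) ≠ α'' (S.h i)) :
    ∃ u : ℤ, (u = 1 ∨ u = -1) ∧
      (∀ i, α'' (S.f i) = (u * S.epsf j i) • S.gam i) ∧
      (∀ i, α'' (S.h i) = -((u * S.epsf j i) • S.gam i)) ∧
      (∀ i, α'' (S.g i) = (u * S.sgt j i) • S.gam (i-1)
          + (u * S.sgt j i * S.mu j i) • S.gam i) := by
  obtain ⟨C, hsc⟩ := hcompat
  set ζ : ZMod S.n → ℤ := fun i => if α'' (S.f i) = S.gam i then 1 else -1 with hζdef
  set σ : ZMod S.n → ℤ := fun i => if α'' (S.g i) = S.aG (S.g i) then S.k i else -S.k i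
    with hσdef
  have hζu : ∀ i, ζ i = 1 ∨ ζ i = -1 := by
    intro i; rw [hζdef]; dsimp only; split_ifs <;> simp
  have hσu : ∀ i, σ i = 1 ∨ σ i = -1 := by
    intro i; rw [hσdef]; dsimp only; split_ifs <;> rcases hk1 i with h | h <;> omega
  have hζf : ∀ i, α'' (S.f i) = ζ i • S.gam i := by
    intro i
    rw [hζdef]
    dsimp only
    split_ifs with hcase
    · rw [hcase, one_smul]
    · have := (pm_eq_iff _ _).mp (hsame (S.f i))
      rw [S.aG_f i] at this
      rcases this with h | h
      · exact absurd h hcase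
      · rw [h]; module
  have hζh : ∀ i, α'' (S.h i) = -(ζ i • S.gam i) := by
    intro i
    have := (pm_eq_iff _ _).mp (hsame (S.h i))
    rw [S.aG_h i] at this
    have hf := hζf i
    rcases hζu i with hz | hz <;> rw [hz] at hf ⊢ <;> rcases this with h | h
    · exact absurd (h.trans (by rw [hf, one_smul])) (fun hq => hne i hq.symm)
    · rw [h]; module
    · rw [h]; module
    · exfalso
      apply hne i
      rw [hf, h]
      module
  have hσg : ∀ i, α'' (S.g i) = σ i • S.gam (i-1) + (σ i * S.mu j i) • S.gam i := by
    intro i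
    rw [hσdef]
    dsimp only
    split_ifs with hcase
    · rw [hcase]
      exact S.aG_g j hk1 hj hjuniq i
    · have := (pm_eq_iff _ _).mp (hsame (S.g i))
      rcases this with h | h
      · exact absurd h hcase
      · rw [h, S.aG_g j hk1 hj hjuniq i]
        module
  obtain ⟨u, huu, hζfin, hσfin⟩ := S.master j ζ σ hζu hσu
    (fun i => S.Rg j α'' C ζ σ hsc hζu hσu hζf hζh hσg i)
    (fun i => S.Rf j α'' C ζ σ hsc hζu hσu hζf hζh hσg i)
    (fun i => S.Rf' j α'' C ζ σ hsc hζu hσu hζf hζh hσg i)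
  refine ⟨u, huu, ?_, ?_, ?_⟩
  · intro i
    rw [hζf i, hζfin i]
  · intro i
    rw [hζh i, hζfin i]
  · intro i
    rw [hσg i, hσfin i]

end An
end Section7
lemma toC_re (a : Zm 2) : (toC a).re = (a 0 : ℝ) := by
  simp [toC]

lemma toC_im (a : Zm 2) : (toC a).im = (a 1 : ℝ) := by
  simp [toC]

lemma toC_add (a b : Zm 2) : toC (a + b) = toC a + toC b := by
  simp only [toC, Pi.add_apply]
  push_cast
  ring

lemma toC_zero : toC (0 : Zm 2) = 0 := by
  simp [toC]

/-- If the labels at a `3`-valent vertex sum to zero and two of them are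
independent, the vertex is interior. -/
lemma interior_of_three {G : OrGraph} {α : G.E → Zm 2} {p : G.V}
    {e1 e2 e3 : G.E} (h1 : G.src e1 = p) (h2 : G.src e2 = p) (h3 : G.src e3 = p)
    (d12 : e1 ≠ e2) (d13 : e1 ≠ e3) (d23 : e2 ≠ e3)
    (hexh : ∀ e, G.src e = p → e = e1 ∨ e = e2 ∨ e = e3)
    (hdet : (α e1) 0 * (α e2) 1 - (α e1) 1 * (α e2) 0 ≠ 0)
    (hsum : α e1 + α e2 + α e3 = 0) :
    InteriorVtx G α p := by
  intro x
  set U := toC (α e1) with hU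
  set V := toC (α e2) with hV
  set W := toC (α e3) with hW
  have hUVW : U + V + W = 0 := by
    rw [hU, hV, hW, ← toC_add, ← toC_add, hsum, toC_zero]
  have hD : U.re * V.im - U.im * V.re
      = ((α e1 0 * α e2 1 - α e1 1 * α e2 0 : ℤ) : ℝ) := by
    rw [hU, hV, toC_re, toC_im, toC_re, toC_im]
    push_cast
    ring
  have hDnz : U.re * V.im - U.im * V.re ≠ 0 := by
    rw [hD]
    exact_mod_cast hdet
  set D := U.re * V.im - U.im * V.re with hDD
  set a := (x.re * V.im - x.im * V.re) / D with ha
  set bb := (U.re * x.im - U.im * x.re) / D with hbb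
  have hx : x = a • U + bb • V := by
    apply Complex.ext
    · rw [Complex.add_re, Complex.real_smul, Complex.real_smul, Complex.mul_re,
        Complex.mul_re, Complex.ofReal_re, Complex.ofReal_im, ha, hbb]
      simp only [Complex.ofReal_re, Complex.ofReal_im]
      field_simp
      ring
    · rw [Complex.add_im, Complex.real_smul, Complex.real_smul, Complex.mul_im,
        Complex.mul_im, Complex.ofReal_re, Complex.ofReal_im, ha, hbb]
      simp only [Complex.ofReal_re, Complex.ofReal_im]
      field_simp
      ring
  set t := max (max (-a) (-bb)) 0 with ht
  have hta : -a ≤ t := le_trans (le_max_left _ _) (le_max_left _ _)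
  have htb : -bb ≤ t := le_trans (le_max_right _ _) (le_max_left _ _)
  have ht0 : 0 ≤ t := le_max_right _ _
  classical
  refine ⟨fun e => if e = e1 then a + t else if e = e2 then bb + t else
    if e = e3 then t else 0, ?_, ?_⟩
  · intro e
    dsimp only
    split_ifs <;> linarith
  · have hfil : Finset.univ.filter (fun e : G.E => G.src e = p)
        = ({e1, e2, e3} : Finset G.E) := by
      ext ed
      simp only [Finset.mem_filter, Finset.mem_univ, true_and, Finset.mem_insert,
        Finset.mem_singleton]
      constructor
      · exact hexh ed
      · rintro (rfl | rfl | rfl) <;> assumption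
    rw [hfil]
    rw [Finset.sum_insert (by simp [d12, d13]), Finset.sum_insert (by simp [d23]),
      Finset.sum_singleton]
    dsimp only
    rw [if_pos rfl, if_neg (fun hq => d12 hq.symm), if_pos rfl,
      if_neg (fun hq => d13 hq.symm), if_neg (fun hq => d23 hq.symm), if_pos rfl]
    rw [← hU, ← hV, ← hW]
    have hWW : W = -U - V := by linear_combination hUVW
    rw [hWW, hx]
    push_cast
    rw [Complex.real_smul, Complex.real_smul, Complex.real_smul, Complex.real_smul,
      Complex.real_smul]
    push_cast
    ring
namespace Section7
variable (S : Section7)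

lemma val_inj {i l : ZMod S.n} (h : i.val = l.val) : i = l := by
  rw [← S.cast_j i, ← S.cast_j l, h]

lemma val_pos_of_ne_zero {i : ZMod S.n} (h : i ≠ 0) : 1 ≤ i.val := by
  rcases Nat.eq_zero_or_pos i.val with h0 | h0
  · exfalso
    apply h
    apply S.val_inj
    rw [h0, ZMod.val_zero]
  · exact h0

lemma val_sub_one {i : ZMod S.n} (h : i ≠ 0) : (i-1).val = i.val - 1 := by
  have h1 := S.val_pos_of_ne_zero h
  have h2 := S.val_lt i
  conv_lhs => rw [← S.cast_j i]
  rw [S.cast_pred i.val h1, S.castval _ (by omega)]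

lemma val_zero_sub_one : ((0:ZMod S.n) - 1).val = S.n - 1 := by
  rw [S.zero_sub_one, S.castval _ (by have := S.hn; omega)]

/-- The sign of the third edge at `pv i`. -/
def lbe (j i : ZMod S.n) : ℤ := if i = 0 then S.epsf j (i-1) else -(S.epsf j (i-1))

lemma lbe_unit (j i : ZMod S.n) : S.lbe j i = 1 ∨ S.lbe j i = -1 := by
  unfold lbe
  rcases S.epsf_unit j (i-1) with h | h <;> rw [h] <;> split_ifs <;> simp

lemma signs1 (j i : ZMod S.n) : S.lbe j i + S.sgt j i = 0 := by
  unfold lbe epsf sgt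
  have hJ := S.val_lt j
  by_cases h0 : i = 0
  · rw [if_pos h0, h0, S.val_zero_sub_one, ZMod.val_zero]
    have := S.hn
    rw [if_neg (by omega), if_pos (by omega)]
    ring
  · rw [if_neg h0, S.val_sub_one h0]
    have h1 := S.val_pos_of_ne_zero h0
    by_cases hle : i.val ≤ j.val
    · rw [if_pos (by omega), if_pos hle]
      ring
    · rw [if_neg (by omega), if_neg hle]
      ring

lemma signs2 (j i : ZMod S.n) : S.epsf j i + S.sgt j i * S.mu j i = 0 := by
  unfold epsf sgt mu
  by_cases hij : i = j
  · subst hij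
    rw [if_pos rfl, if_neg (by omega), if_pos (by omega)]
    ring
  · rw [if_neg hij]
    have hne : i.val ≠ j.val := fun hq => hij (S.val_inj hq)
    by_cases hlt : i.val < j.val
    · rw [if_pos hlt, if_pos (by omega)]
      ring
    · rw [if_neg hlt, if_neg (by omega)]
      ring

section Int
variable (j : ZMod S.n) (α'' : S.G.E → Zm 2) (C : Connection S.G) (u : ℤ)

lemma b_label (hsc : SignedCompat S.G α'' C)
    (hζf : ∀ i, α'' (S.f i) = (u * S.epsf j i) • S.gam i)
    (hζh : ∀ i, α'' (S.h i) = -((u * S.epsf j i) • S.gam i)) (i : ZMod S.n) :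
    α'' (S.b i) = (u * S.lbe j i) • S.gam (i-1) := by
  unfold b lbe
  split_ifs with h
  · rw [hsc.2.2, hζh, neg_neg]
  · rw [hsc.2.2, hζf]
    module

lemma c_label (hsc : SignedCompat S.G α'' C)
    (hζf : ∀ i, α'' (S.f i) = (u * S.epsf j i) • S.gam i)
    (hζh : ∀ i, α'' (S.h i) = -((u * S.epsf j i) • S.gam i)) (i : ZMod S.n) :
    α'' (S.c i) = -((u * S.lbe j i) • S.gam (i-1)) := by
  unfold c lbe
  split_ifs with h
  · rw [hsc.2.2, hζf]
  · rw [hsc.2.2, hζh, neg_neg]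
    module

lemma interior_all (hsc : SignedCompat S.G α'' C) (huu : u = 1 ∨ u = -1)
    (hζf : ∀ i, α'' (S.f i) = (u * S.epsf j i) • S.gam i)
    (hζh : ∀ i, α'' (S.h i) = -((u * S.epsf j i) • S.gam i))
    (hσg : ∀ i, α'' (S.g i) = (u * S.sgt j i) • S.gam (i-1)
        + (u * S.sgt j i * S.mu j i) • S.gam i) :
    ∀ p : S.G.V, InteriorVtx S.G α'' p := by
  intro p
  have husq : u * u = 1 := unit_sq huu
  obtain ⟨i, hp | hp⟩ := S.vertex_cases p
  · -- at pv i
    subst hp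
    apply interior_of_three (e1 := S.f i) (e2 := S.b i) (e3 := S.g i) rfl (S.src_b i)
      (S.g_src i) (S.f_ne_b i) (S.f_ne_g i) (S.b_ne_g i)
      (fun ed hed => by
        rcases S.edges_at_p i ed hed with h | h | h
        · exact Or.inl h
        · exact Or.inr (Or.inr h)
        · exact Or.inr (Or.inl h))
    · -- determinant
      rw [hζf, S.b_label j α'' C u hsc hζf hζh i]
      simp only [Pi.smul_apply, smul_eq_mul]
      have hd := S.det_ne i
      have he := unit_sq (S.epsf_unit j i)
      have hl := unit_sq (S.lbe_unit j i)
      intro hq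
      apply hd
      have expand : (u * S.epsf j i) * (u * S.lbe j i) *
          (S.gam (i-1) 0 * S.gam i 1 - S.gam (i-1) 1 * S.gam i 0) = 0 := by
        linarith [hq]
      rcases mul_eq_zero.mp expand with h' | h'
      · exfalso
        have := unit_nz huu
        have := unit_nz (S.epsf_unit j i)
        have := unit_nz (S.lbe_unit j i)
        rcases mul_eq_zero.mp h' with h'' | h'' <;> rcases mul_eq_zero.mp h'' with h3 | h3 <;>
          first
          | (exact absurd h3 (by assumption))
          | (exact absurd h'' (by assumption))
      · exact h'
    · -- sum of labels
      rw [hζf, S.b_label j α'' C u hsc hζf hζh i, hσg]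
      have h1 := S.signs1 j i
      have h2 := S.signs2 j i
      have key1 : u * S.lbe j i + u * S.sgt j i = 0 := by
        have : u * (S.lbe j i + S.sgt j i) = 0 := by rw [h1]; ring
        linarith [this]
      have key2 : u * S.epsf j i + u * S.sgt j i * S.mu j i = 0 := by
        have : u * (S.epsf j i + S.sgt j i * S.mu j i) = 0 := by rw [h2]; ring
        linarith [this]
      have : (u * S.epsf j i) • S.gam i + (u * S.lbe j i) • S.gam (i - 1) +
          ((u * S.sgt j i) • S.gam (i - 1) + (u * S.sgt j i * S.mu j i) • S.gam i)
          = (u * S.lbe j i + u * S.sgt j i) • S.gam (i-1)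
            + (u * S.epsf j i + u * S.sgt j i * S.mu j i) • S.gam i := by
        module
      rw [this, key1, key2]
      module
  · -- at qv i
    subst hp
    have hrevg : α'' (S.G.rev (S.g i)) = -α'' (S.g i) := hsc.2.2 _
    apply interior_of_three (e1 := S.h i) (e2 := S.c i) (e3 := S.G.rev (S.g i)) rfl
      (S.src_c i) (S.src_revg i) (S.h_ne_c i) (S.h_ne_revg i)
      (fun hq => S.c_ne_revg i hq) (fun ed hed => ?_)
    · rw [hζh, S.c_label j α'' C u hsc hζf hζh i]
      simp only [Pi.neg_apply, Pi.smul_apply, smul_eq_mul]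
      have hd := S.det_ne i
      intro hq
      apply hd
      have expand : (u * S.epsf j i) * (u * S.lbe j i) *
          (S.gam (i-1) 0 * S.gam i 1 - S.gam (i-1) 1 * S.gam i 0) = 0 := by
        linarith [hq]
      rcases mul_eq_zero.mp expand with h' | h'
      · exfalso
        have := unit_nz huu
        have := unit_nz (S.epsf_unit j i)
        have := unit_nz (S.lbe_unit j i)
        rcases mul_eq_zero.mp h' with h'' | h'' <;> rcases mul_eq_zero.mp h'' with h3 | h3 <;>
          first
          | (exact absurd h3 (by assumption))
          | (exact absurd h'' (by assumption))
      · exact h'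
    · rw [hζh, S.c_label j α'' C u hsc hζf hζh i, hrevg, hσg]
      have h1 := S.signs1 j i
      have h2 := S.signs2 j i
      have key1 : u * S.lbe j i + u * S.sgt j i = 0 := by
        have : u * (S.lbe j i + S.sgt j i) = 0 := by rw [h1]; ring
        linarith [this]
      have key2 : u * S.epsf j i + u * S.sgt j i * S.mu j i = 0 := by
        have : u * (S.epsf j i + S.sgt j i * S.mu j i) = 0 := by rw [h2]; ring
        linarith [this]
      have : -((u * S.epsf j i) • S.gam i) + -((u * S.lbe j i) • S.gam (i - 1)) +
          -((u * S.sgt j i) • S.gam (i - 1) + (u * S.sgt j i * S.mu j i) • S.gam i)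
          = (-(u * S.lbe j i + u * S.sgt j i)) • S.gam (i-1)
            + (-(u * S.epsf j i + u * S.sgt j i * S.mu j i)) • S.gam i := by
        module
      rw [this, key1, key2]
      module
    · rcases S.edges_at_q i ed hed with h | h | h
      · exact Or.inl h
      · exact Or.inr (Or.inr h)
      · exact Or.inr (Or.inl h)

end Int
end Section7
lemma self_ne_neg {x : Zm 2} (hx : x ≠ 0) : x ≠ -x := by
  intro h
  apply hx
  funext t
  have h2 := congrFun h t
  simp only [Pi.neg_apply] at h2
  show x t = 0
  linarith

/-- Scaling by a unit as a linear equivalence. -/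
noncomputable def scaleEquiv (u : ℤ) (hu : u = 1 ∨ u = -1) : Zm 2 ≃ₗ[ℤ] Zm 2 where
  toFun z := u • z
  map_add' a b := smul_add u a b
  map_smul' c a := smul_comm u c a
  invFun z := u • z
  left_inv z := by
    show u • (u • z) = z
    rw [smul_smul, unit_sq hu, one_smul]
  right_inv z := by
    show u • (u • z) = z
    rw [smul_smul, unit_sq hu, one_smul]

theorem statement16' (S : Section7) (j : ZMod S.n)
    (hk1 : ∀ i, S.k i = 1 ∨ S.k i = -1)
    (hj : S.k j ≠ (if j = 0 then - S.k (j - 1) else S.k (j - 1)))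
    (hjuniq : ∀ i, i ≠ j → S.k i = (if i = 0 then - S.k (i - 1) else S.k (i - 1)))
    (α' : S.G.E → Zm 2)
    (hcompat : ∃ C : Connection S.G, SignedCompat S.G α' C)
    (hsame : ∀ ed, pm (α' ed) = pm (S.aG ed))
    (hf : ∀ i : ZMod S.n, α' (S.f i) =
      (if i.val < j.val then - S.aB (S.e i) else S.aB (S.e i)))
    (hh : ∀ i : ZMod S.n, α' (S.h i) = - α' (S.f i)) :
    (α' (S.g j) = - S.aB (S.e (j - 1)) - S.aB (S.e j)) ∧
    (∀ i : ZMod S.n, j.val < i.val → α' (S.g i) = S.aB (S.e (i - 1)) - S.aB (S.e i)) ∧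
    (∀ i : ZMod S.n, i.val < j.val → α' (S.g i) = - S.aB (S.e (i - 1)) + S.aB (S.e i)) ∧
    (∀ p : S.G.V, InteriorVtx S.G α' p) ∧
    (∀ α'' : S.G.E → Zm 2, (∃ C : Connection S.G, SignedCompat S.G α'' C) →
      (∀ ed, pm (α'' ed) = pm (S.aG ed)) → (∀ i, α'' (S.f i) ≠ α'' (S.h i)) →
      Nonempty (SignedGKMIso S.G α'' S.G α')) := by
  have hne' : ∀ i, α' (S.f i) ≠ α' (S.h i) := by
    intro i
    rw [hh i]
    apply self_ne_neg
    rw [hf i]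
    split_ifs
    · intro hq
      apply S.gam_nz i
      have : -S.aB (S.e i) = -S.gam i := rfl
      rw [this] at hq
      have := congrArg Neg.neg hq
      rw [neg_neg, neg_zero] at this
      exact this
    · exact S.gam_nz i
  obtain ⟨u, huu, hζf, hζh, hσg⟩ := S.analyze j hk1 hj hjuniq α' hcompat hsame hne'
  -- identify u = 1
  have hu1 : u = 1 := by
    have h1 := hζf j
    have h2 := hf j
    rw [if_neg (by omega)] at h2
    unfold Section7.epsf at h1
    rw [if_neg (by omega)] at h1
    have : S.aB (S.e j) = S.gam j := rfl
    rw [h1] at h2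
    rw [this] at h2
    have := Section7.smul_cancel (S.gam_nz j) (v := S.gam j) (a := u * 1) (b := 1)
      (by rw [h2]; module)
    omega
  subst hu1
  simp only [one_mul] at hζf hζh hσg
  obtain ⟨C, hsc⟩ := hcompat
  refine ⟨?_, ?_, ?_, ?_, ?_⟩
  · show α' (S.g j) = -S.gam (j-1) - S.gam j
    rw [hσg j]
    unfold Section7.sgt Section7.mu
    rw [if_pos (le_refl _), if_pos rfl]
    module
  · intro i hlt
    show α' (S.g i) = S.gam (i-1) - S.gam i
    rw [hσg i]
    unfold Section7.sgt Section7.mu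
    rw [if_neg (by omega), if_neg (by intro hq; subst hq; omega)]
    module
  · intro i hlt
    show α' (S.g i) = -S.gam (i-1) + S.gam i
    rw [hσg i]
    unfold Section7.sgt Section7.mu
    rw [if_pos (by omega), if_neg (by intro hq; subst hq; omega)]
    module
  · exact S.interior_all j α' C 1 hsc (Or.inl rfl)
      (by simpa using hζf) (by simpa using hζh) (by simpa using hσg)
  · intro α'' hcompat'' hsame'' hne''
    obtain ⟨u'', huu'', hζf'', hζh'', hσg''⟩ :=
      S.analyze j hk1 hj hjuniq α'' hcompat'' hsame'' hne''
    obtain ⟨C'', hsc''⟩ := hcompat''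
    have husq : u'' * u'' = 1 := unit_sq huu''
    have hkey : ∀ ed, α' ed = u'' • α'' ed := by
      intro ed
      obtain ⟨i, hc⟩ := S.edge_cases ed
      have hff : α' (S.f i) = u'' • α'' (S.f i) := by
        rw [hζf i, hζf'' i, smul_smul, ← mul_assoc, husq, one_mul]
      have hhh : α' (S.h i) = u'' • α'' (S.h i) := by
        rw [hζh i, hζh'' i, smul_neg, smul_smul, ← mul_assoc, husq, one_mul]
      have hgg : α' (S.g i) = u'' • α'' (S.g i) := by
        rw [hσg i, hσg'' i, smul_add, smul_smul, smul_smul, ← mul_assoc, husq, one_mul,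
          ← mul_assoc, ← mul_assoc, husq, one_mul]
      rcases hc with h | h | h | h | h | h <;> subst h
      · exact hff
      · exact hhh
      · exact hgg
      · rw [hsc.2.2, hsc''.2.2, hff, smul_neg]
      · rw [hsc.2.2, hsc''.2.2, hhh, smul_neg]
      · rw [hsc.2.2, hsc''.2.2, hgg, smul_neg]
    refine ⟨⟨Equiv.refl _, Equiv.refl _, scaleEquiv u'' huu'', fun e => rfl, fun e => rfl,
      fun e => rfl, fun e => ?_⟩⟩
    exact hkey e

/-- in the Section 7 setting, a normalized type III signed structure
has uniquely determined fiber weights, is unique up to isomorphism, and all its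
vertices are interior. -/
theorem statement16 (S : Section7) (j : ZMod S.n)
    (hk1 : ∀ i, S.k i = 1 ∨ S.k i = -1)
    (hj : S.k j ≠ (if j = 0 then - S.k (j - 1) else S.k (j - 1)))
    (hjuniq : ∀ i, i ≠ j → S.k i = (if i = 0 then - S.k (i - 1) else S.k (i - 1)))
    (α' : S.G.E → Zm 2)
    (hcompat : ∃ C : Connection S.G, SignedCompat S.G α' C)
    (hsame : ∀ ed, pm (α' ed) = pm (S.aG ed))
    (hf : ∀ i : ZMod S.n, α' (S.f i) =
      (if i.val < j.val then - S.aB (S.e i) else S.aB (S.e i)))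
    (hh : ∀ i : ZMod S.n, α' (S.h i) = - α' (S.f i)) :
    (α' (S.g j) = - S.aB (S.e (j - 1)) - S.aB (S.e j)) ∧
    (∀ i : ZMod S.n, j.val < i.val → α' (S.g i) = S.aB (S.e (i - 1)) - S.aB (S.e i)) ∧
    (∀ i : ZMod S.n, i.val < j.val → α' (S.g i) = - S.aB (S.e (i - 1)) + S.aB (S.e i)) ∧
    (∀ p : S.G.V, InteriorVtx S.G α' p) ∧
    (∀ α'' : S.G.E → Zm 2, (∃ C : Connection S.G, SignedCompat S.G α'' C) →
      (∀ ed, pm (α'' ed) = pm (S.aG ed)) → (∀ i, α'' (S.f i) ≠ α'' (S.h i)) →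
      Nonempty (SignedGKMIso S.G α'' S.G α')) := by
  exact statement16' S j hk1 hj hjuniq α' hcompat hsame hf hh

end GKMPaper
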